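/- arXiv:2601.20961 — 4 statements merged into one kernel-verified Lean document; each statement's English description precedes it below -/
import Mathlib

section
/- For any finite concept class H of Borel-measurable functions h : X → {0,1} on a Polish space X with |H| ≥ 2, H is agnostically learnable with optimal rate e^{−n}: H is agnostically learnable at rate R(n) = e^{−n}, and H is not agnostically learnable faster than R(n) = e^{−n}. -/
open MeasureTheory Filter
open scoped ENNReal

namespace Agn

section Basic

variable {X : Type*} [MeasurableSpace X]

/-- A set is universally measurable: null-measurable w.r.t. every probability measure. -/
def UnivMeasurableSet {α : Type*} [MeasurableSpace α] (s : Set α) : Prop :=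
  ∀ μ : Measure α, IsProbabilityMeasure μ → NullMeasurableSet s μ

/-- A function is universally measurable. -/
def UnivMeasurable {α β : Type*} [MeasurableSpace α] [MeasurableSpace β] (f : α → β) : Prop :=
  ∀ μ : Measure α, IsProbabilityMeasure μ → NullMeasurable f μ

/-- Error rate of a classifier under `P`. -/
noncomputable def er (P : Measure (X × Bool)) (h : X → Bool) : ℝ :=
  (P {p | h p.1 ≠ p.2}).toReal

/-- The best error rate achievable by the class `H`. -/
noncomputable def optErr (P : Measure (X × Bool)) (H : Set (X → Bool)) : ℝ :=
  sInf ((fun h => er P h) '' H)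

/-- The i.i.d. sample measure `P^n`. -/
noncomputable def sampleMeasure (P : Measure (X × Bool)) (n : ℕ) :
    Measure (Fin n → X × Bool) :=
  Measure.pi fun _ => P

end Basic

/-- A (candidate) learning algorithm: a function of the sample and the test point. -/
abbrev Alg (X : Type*) := (n : ℕ) → (Fin n → X × Bool) → X → Bool

section Learn

variable {X : Type*} [MeasurableSpace X]

/-- A learning algorithm: a sequence of universally measurable functions. -/
def IsLearningAlg (f : Alg X) : Prop :=
  ∀ n : ℕ, UnivMeasurable fun p : (Fin n → X × Bool) × X => f n p.1 p.2

/-- Expected error rate of the classifier returned from an i.i.d. sample of size `n`. -/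
noncomputable def expErr (P : Measure (X × Bool)) (f : Alg X) (n : ℕ) : ℝ :=
  ∫ S, er P (f n S) ∂ sampleMeasure P n

/-- Expected excess error rate. -/
noncomputable def excess (P : Measure (X × Bool)) (H : Set (X → Bool)) (f : Alg X)
    (n : ℕ) : ℝ :=
  expErr P f n - optErr P H

/-- `H` is agnostically learnable at rate `R`. -/
def LearnableAtRate (H : Set (X → Bool)) (R : ℕ → ℝ) : Prop :=
  ∃ f : Alg X, IsLearningAlg f ∧
    ∀ P : Measure (X × Bool), IsProbabilityMeasure P →
      ∃ C > (0 : ℝ), ∃ c > (0 : ℝ), ∀ n : ℕ, excess P H f n ≤ C * R ⌈c * (n : ℝ)⌉₊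

/-- `H` is not agnostically learnable faster than `R`. -/
def NotLearnableFasterThan (H : Set (X → Bool)) (R : ℕ → ℝ) : Prop :=
  ∃ C > (0 : ℝ), ∃ c > (0 : ℝ), ∀ f : Alg X, IsLearningAlg f →
    ∃ P : Measure (X × Bool), IsProbabilityMeasure P ∧
      ∃ᶠ n : ℕ in atTop, C * R ⌈c * (n : ℝ)⌉₊ ≤ excess P H f n

/-- `H` is agnostically learnable with optimal rate exactly `e^{-o(n)}`. -/
def OptimalRateNearExp (H : Set (X → Bool)) : Prop :=
  (∀ ψ : ℕ → ℝ, (∀ n, 0 ≤ ψ n) →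
      Tendsto (fun n : ℕ => ψ n / (n : ℝ)) atTop (nhds 0) →
      LearnableAtRate H fun n => Real.exp (-ψ n)) ∧
  ∀ f : Alg X, IsLearningAlg f →
    ∃ ψ : ℕ → ℝ, (∀ n, 0 ≤ ψ n) ∧
      Tendsto (fun n : ℕ => ψ n / (n : ℝ)) atTop (nhds 0) ∧
      ∃ P : Measure (X × Bool), IsProbabilityMeasure P ∧
        ∃ᶠ n in atTop, Real.exp (-ψ n) ≤ excess P H f n

/-- `H` is agnostically learnable with optimal rate exactly `o(n^{-1/2})`. -/
def OptimalRateSuperRoot (H : Set (X → Bool)) : Prop :=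
  (∃ f : Alg X, IsLearningAlg f ∧
      ∀ P : Measure (X × Bool), IsProbabilityMeasure P →
        Tendsto (fun n : ℕ => Real.sqrt (n : ℝ) * excess P H f n) atTop (nhds 0)) ∧
  ∀ R : ℕ → ℝ, (∀ n, 0 < R n) →
    Tendsto (fun n : ℕ => Real.sqrt (n : ℝ) * R n) atTop (nhds 0) →
    ¬ LearnableAtRate H R

/-- `H` requires arbitrarily slow rates for agnostic learning. -/
def RequiresArbitrarilySlowRates (H : Set (X → Bool)) : Prop :=
  (∃ f : Alg X, IsLearningAlg f ∧
      ∀ P : Measure (X × Bool), IsProbabilityMeasure P →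
        Filter.limsup (fun n : ℕ => excess P H f n) atTop ≤ 0) ∧
  ∀ R : ℕ → ℝ, (∀ n, 0 < R n) → Tendsto R atTop (nhds 0) →
    NotLearnableFasterThan H R

end Learn

/-- A witness of the image admissible Suslin property. -/
structure SuslinWitness (X : Type*) [MeasurableSpace X] (H : Set (X → Bool)) where
  Θ : Type
  topΘ : TopologicalSpace Θ
  measΘ : MeasurableSpace Θ
  polish : @PolishSpace Θ topΘ
  borel : @BorelSpace Θ topΘ measΘ
  F : Θ × X → Bool
  measF : @Measurable (Θ × X) Bool (@Prod.instMeasurableSpace Θ X measΘ _) _ F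
  range_eq : H = {g | ∃ θ : Θ, g = fun x => F (θ, x)}

/-- The image admissible Suslin property. -/
def ImageAdmissibleSuslin (X : Type*) [MeasurableSpace X] (H : Set (X → Bool)) : Prop :=
  Nonempty (SuslinWitness X H)

section Trees

variable {X : Type*}

/-- `H` shatters an infinite Littlestone tree. -/
def ShattersInfLittlestoneTree (H : Set (X → Bool)) : Prop :=
  ∃ t : List Bool → X, ∀ y : ℕ → Bool, ∀ n : ℕ, ∃ h ∈ H,
    ∀ k ≤ n, h (t (List.ofFn fun i : Fin k => y i)) = y k

/-- `H` shatters an infinite VCL tree. -/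
def ShattersInfVCLTree (H : Set (X → Bool)) : Prop :=
  ∃ t : (k : ℕ) → ((j : Fin k) → Fin (j.1 + 1) → Bool) → Fin (k + 1) → X,
    ∀ y : (k : ℕ) → Fin (k + 1) → Bool, ∀ n : ℕ, ∃ h ∈ H,
      ∀ k ≤ n, ∀ i : Fin (k + 1), h (t k (fun j => y j.1) i) = y k i

/-- `H` (VC-)shatters some set of `n` points. -/
def Shatters (H : Set (X → Bool)) (n : ℕ) : Prop :=
  ∃ x : Fin n → X, ∀ y : Fin n → Bool, ∃ h ∈ H, ∀ i, h (x i) = y i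

end Trees

/-- `log x := ln (max x e)`, the truncated logarithm used throughout. -/
noncomputable def clog (x : ℝ) : ℝ := Real.log (max x (Real.exp 1))

/-- `ε²(n,δ) = (1/n)(d log(n/d) + log(1/δ))`. -/
noncomputable def epsSq (d n : ℕ) (δ : ℝ) : ℝ :=
  (1 / (n : ℝ)) * ((d : ℝ) * clog ((n : ℝ) / (d : ℝ)) + clog (1 / δ))

section Emp

variable {X : Type*}

/-- Empirical risk on a sample. -/
noncomputable def empErr {n : ℕ} (S : Fin n → X × Bool) (h : X → Bool) : ℝ :=
  (1 / (n : ℝ)) * ∑ i, if h (S i).1 = (S i).2 then 0 else 1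

/-- Empirical distance between two classifiers on a sample. -/
noncomputable def empDist {n : ℕ} (S : Fin n → X × Bool) (f g : X → Bool) : ℝ :=
  (1 / (n : ℝ)) * ∑ i, if f (S i).1 = g (S i).1 then 0 else 1

end Emp

section Mix

variable {X : Type*} [MeasurableSpace X]

/-- The uniform mixture `P̄ = (1/n) ∑ Pᵢ`. -/
noncomputable def mixMeasure {n : ℕ} (P : Fin n → Measure (X × Bool)) : Measure (X × Bool) :=
  (n : ℝ≥0∞)⁻¹ • ∑ i, P i

/-- Population distance `Q({(x,y) : f x ≠ g x})`. -/
noncomputable def popDist (Q : Measure (X × Bool)) (f g : X → Bool) : ℝ :=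
  (Q {p | f p.1 ≠ g p.1}).toReal

end Mix

section Partial

variable {X : Type*} [MeasurableSpace X]

/-- Realizable binary classifications of a finite sample by a partial concept class. -/
def pproj (G : Set (X → Option Bool)) {n : ℕ} (x : Fin n → X) : Set (Fin n → Bool) :=
  {b | ∃ g ∈ G, ∀ i, g (x i) = some (b i)}

/-- The partial class `G` shatters some `n` points. -/
def PShatters (G : Set (X → Option Bool)) (n : ℕ) : Prop :=
  ∃ x : Fin n → X, pproj G x = Set.univ

/-- Universal measurability of a partial concept class. -/
def PUnivMeasurable (G : Set (X → Option Bool)) : Prop :=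
  ∀ (n : ℕ) (b : Fin n → Bool), UnivMeasurableSet {x : Fin n → X | b ∈ pproj G x}

/-- The conditional probability `P(Y = y | X = x)` determined by `η`. -/
noncomputable def condProb (η : X → ℝ) (x : X) (y : Bool) : ℝ :=
  if y then η x else 1 - η x

/-- The Bayes classifier determined by `η`. -/
noncomputable def bayes (η : X → ℝ) : X → Bool := fun x => decide ((1 / 2 : ℝ) ≤ η x)

/-- The marginal distribution of `P` on `X`. -/
noncomputable def marginalX (P : Measure (X × Bool)) : Measure X := P.map Prod.fst

/-- `η` is a (Borel) version of `P(Y = 1 | X = ·)` with values in `[0,1]`. -/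
def IsCondDist (P : Measure (X × Bool)) (η : X → ℝ) : Prop :=
  Measurable η ∧ (∀ x, 0 ≤ η x ∧ η x ≤ 1) ∧
    ∀ s : Set X, MeasurableSet s →
      P (s ×ˢ ({true} : Set Bool)) = ∫⁻ x in s, ENNReal.ofReal (η x) ∂ marginalX P

/-- `P` is Bayes-realizable with respect to the partial concept class `G`. -/
def BayesRealizable (G : Set (X → Option Bool)) (P : Measure (X × Bool)) (η : X → ℝ) : Prop :=
  ∀ n : ℕ, ∀ᵐ x ∂ (Measure.pi fun _ : Fin n => marginalX P),
    ∃ b ∈ pproj G x, ∀ i, (1 / 2 : ℝ) ≤ condProb η (x i) (b i)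

end Partial

/-- The Bernoulli measure on `Bool` with success probability `p`. -/
noncomputable def bern (p : ℝ) : Measure Bool :=
  ENNReal.ofReal p • Measure.dirac true + ENNReal.ofReal (1 - p) • Measure.dirac false

section Labels

variable {X : Type*} [MeasurableSpace X]

/-- The conditional law of the labels given the instances. -/
noncomputable def labelLaw (η : X → ℝ) {n : ℕ} (x : Fin n → X) : Measure (Fin n → Bool) :=
  Measure.pi fun i => bern (η (x i))

end Labels

section FinLab

variable {X : Type*}

/-- Empirical risk of a labeling `f` against realized labels `y`. -/
noncomputable def empErrLab {n : ℕ} (y f : Fin n → Bool) : ℝ :=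
  (1 / (n : ℝ)) * ∑ i, if f i = y i then 0 else 1

/-- Hamming distance (normalized) between two labelings. -/
noncomputable def distLab {n : ℕ} (f g : Fin n → Bool) : ℝ :=
  (1 / (n : ℝ)) * ∑ i, if f i = g i then 0 else 1

/-- Semi-empirical error of a labeling on the length-`t` prefix. -/
noncomputable def semiErrFin (η : X → ℝ) {n : ℕ} (x : Fin n → X) (t : ℕ)
    (f : Fin n → Bool) : ℝ :=
  (1 / (t : ℝ)) * ∑ i : Fin n, if i.1 < t then 1 - condProb η (x i) (f i) else 0

/-- Semi-empirical Bayes error on the length-`t` prefix. -/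
noncomputable def semiErrBayesFin (η : X → ℝ) {n : ℕ} (x : Fin n → X) (t : ℕ) : ℝ :=
  (1 / (t : ℝ)) * ∑ i : Fin n, if i.1 < t then min (η (x i)) (1 - η (x i)) else 0

/-- Normalized disagreement between labelings on the length-`t` prefix. -/
noncomputable def distFin {n : ℕ} (t : ℕ) (f g : Fin n → Bool) : ℝ :=
  (1 / (t : ℝ)) * ∑ i : Fin n, if i.1 < t ∧ f i ≠ g i then 1 else 0

end FinLab

section Seq

variable {X : Type*}

/-- The labeling `g` of the first `n` points is realizable by `G`. -/
def memProj (G : Set (X → Option Bool)) (x : ℕ → X) (n : ℕ) (g : ℕ → Bool) : Prop :=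
  ∃ g' ∈ G, ∀ i < n, g' (x i) = some (g i)

/-- Semi-empirical error of a labeling on the first `t` points. -/
noncomputable def semiErrSeq (η : X → ℝ) (x : ℕ → X) (t : ℕ) (g : ℕ → Bool) : ℝ :=
  (1 / (t : ℝ)) * ∑ i ∈ Finset.range t, (1 - condProb η (x i) (g i))

/-- Semi-empirical Bayes error on the first `t` points. -/
noncomputable def semiErrBayesSeq (η : X → ℝ) (x : ℕ → X) (t : ℕ) : ℝ :=
  (1 / (t : ℝ)) * ∑ i ∈ Finset.range t, min (η (x i)) (1 - η (x i))

/-- Normalized disagreement between two labelings on the first `t` points. -/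
noncomputable def distSeq (t : ℕ) (f g : ℕ → Bool) : ℝ :=
  (1 / (t : ℝ)) * ∑ i ∈ Finset.range t, if f i = g i then 0 else 1

/-- Projection of the `ε`-near-optimal realizable labelings of the first `t` points
to the first `m` coordinates. -/
def projGood (G : Set (X → Option Bool)) (η : X → ℝ) (x : ℕ → X) (ε : ℝ) (t m : ℕ) :
    Set (Fin m → Bool) :=
  {b | ∃ g : ℕ → Bool, memProj G x t g ∧
    semiErrSeq η x t g - semiErrBayesSeq η x t ≤ ε ∧ ∀ j : Fin m, b j = g (j : ℕ)}

end Seq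

/-- `Z` is an i.i.d. sequence with common law `P` on the probability space `(Ω, μ)`. -/
def IsIIDSeq {Ω : Type*} [MeasurableSpace Ω] (μ : Measure Ω) {Y : Type*} [MeasurableSpace Y]
    (P : Measure Y) (Z : ℕ → Ω → Y) : Prop :=
  (∀ i, Measurable (Z i)) ∧
    ∀ n : ℕ, μ.map (fun ω => fun i : Fin n => Z (i : ℕ) ω) = Measure.pi fun _ : Fin n => P

section UGCsec

variable {X : Type*} [MeasurableSpace X]

/-- The uniform deviation of empirical frequencies over the class `H`. -/
noncomputable def ugcDev (H : Set (X → Bool)) (Q : Measure X) {n : ℕ} (x : Fin n → X) : ℝ :=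
  sSup ((fun h => |(1 / (n : ℝ)) * (∑ i, if h (x i) = true then (1 : ℝ) else 0) -
      (Q {z | h z = true}).toReal|) '' H)

/-- The universal Glivenko–Cantelli property. -/
def UGC (H : Set (X → Bool)) : Prop :=
  ∀ Q : Measure X, IsProbabilityMeasure Q →
    Tendsto (fun n : ℕ => ∫ x, ugcDev H Q x ∂ (Measure.pi fun _ : Fin n => Q)) atTop (nhds 0)

/-- `H` is totally bounded in `L₁(Q)`. -/
def TotallyBoundedL1 (H : Set (X → Bool)) (Q : Measure X) : Prop :=
  ∀ ε : ℝ, 0 < ε → ∃ H' : Set (X → Bool), H' ⊆ H ∧ H'.Finite ∧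
    ∀ h ∈ H, ∃ h' ∈ H', (Q {x | h' x ≠ h x}).toReal ≤ ε

end UGCsec


section AuxLemmas

set_option maxHeartbeats 1000000

variable {X : Type*} [MeasurableSpace X]



lemma measurableSet_agree {h : X → Bool} (hm : Measurable h) :
    MeasurableSet {p : X × Bool | h p.1 = p.2} := by
  have : {p : X × Bool | h p.1 = p.2}
      = ((fun p : X × Bool => h p.1) ⁻¹' {true} ∩ Prod.snd ⁻¹' {true})
        ∪ ((fun p : X × Bool => h p.1) ⁻¹' {false} ∩ Prod.snd ⁻¹' {false}) := by
    ext ⟨x, y⟩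
    cases y <;> cases hx : h x <;> simp [hx]
  rw [this]
  exact (((hm.comp measurable_fst) (measurableSet_singleton true)).inter
      (measurable_snd (measurableSet_singleton true))).union
    (((hm.comp measurable_fst) (measurableSet_singleton false)).inter
      (measurable_snd (measurableSet_singleton false)))

lemma measurable_errInd {h : X → Bool} (hm : Measurable h) :
    Measurable (fun p : X × Bool => if h p.1 = p.2 then (0:ℝ) else 1) :=
  Measurable.ite (measurableSet_agree hm) measurable_const measurable_const

lemma exp_le_quad {u : ℝ} (hu : |u| ≤ 1) : Real.exp u ≤ 1 + u + u ^ 2 := by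
  have h := Real.exp_bound hu (n := 2) (by norm_num)
  simp [Finset.sum_range_succ, Nat.factorial] at h
  rw [abs_sub_le_iff] at h
  have h1 := h.1
  nlinarith [sq_abs u, sq_nonneg u]

lemma pi_pair_dirac {α : Type*} [MeasurableSpace α] [MeasurableSingletonClass α]
    (n : ℕ) (a : Bool → α) (w : Bool → ℝ≥0∞) (hw : ∀ b, w b ≠ ⊤) :
    (Measure.pi fun _ : Fin n =>
        (w true • Measure.dirac (a true) + w false • Measure.dirac (a false))) =
      ∑ y : Fin n → Bool, (∏ i, w (y i)) • Measure.dirac (fun i => a (y i)) := by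
  classical
  set μ0 : Measure α := w true • Measure.dirac (a true) + w false • Measure.dirac (a false)
    with hμ0
  haveI : IsFiniteMeasure μ0 := by
    constructor
    rw [hμ0]
    simp only [Measure.add_apply, Measure.smul_apply, smul_eq_mul, measure_univ, mul_one]
    exact ENNReal.add_lt_top.2 ⟨(hw true).lt_top, (hw false).lt_top⟩
  refine Measure.pi_eq ?_
  intro s hs
  rw [Measure.finset_sum_apply]
  simp only [Measure.smul_apply, Measure.dirac_apply, smul_eq_mul]
  have hmem : ∀ y : Fin n → Bool,
      (Set.pi Set.univ s).indicator (1 : (Fin n → α) → ℝ≥0∞) (fun i => a (y i))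
        = ∏ i, (s i).indicator (1 : α → ℝ≥0∞) (a (y i)) := by
    intro y
    simp only [Set.indicator_apply, Pi.one_apply, Finset.prod_boole, Set.mem_univ_pi]
    simp
  calc (∑ y : Fin n → Bool, (∏ i, w (y i)) *
          (Set.pi Set.univ s).indicator 1 (fun i => a (y i)))
      = ∑ y : Fin n → Bool, ∏ i, (w (y i) * (s i).indicator 1 (a (y i))) := by
        refine Finset.sum_congr rfl fun y _ => ?_
        rw [hmem y, Finset.prod_mul_distrib]
    _ = ∏ i : Fin n, ∑ b : Bool, (w b * (s i).indicator 1 (a b)) :=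
        (Fintype.prod_sum (fun (i : Fin n) (b : Bool) => w b * (s i).indicator 1 (a b))).symm
    _ = ∏ i : Fin n, μ0 (s i) := by
        refine Finset.prod_congr rfl fun i _ => ?_
        rw [Fintype.sum_bool, hμ0]
        simp [Measure.add_apply, Measure.smul_apply, Measure.dirac_apply]
  -- conclude: goal is μ' (pi univ s) = ∏ μ0 (s i); the calc gave it


lemma er_nonneg (P : Measure (X × Bool)) (h : X → Bool) : 0 ≤ er P h :=
  ENNReal.toReal_nonneg

lemma er_le_one (P : Measure (X × Bool)) [IsProbabilityMeasure P] (h : X → Bool) :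
    er P h ≤ 1 := by
  have h1 : P {p | h p.1 ≠ p.2} ≤ 1 := prob_le_one
  have := ENNReal.toReal_mono ENNReal.one_ne_top h1
  simpa [er] using this

lemma integral_errInd (P : Measure (X × Bool)) [IsProbabilityMeasure P] {h : X → Bool}
    (hm : Measurable h) :
    ∫ p, (if h p.1 = p.2 then (0:ℝ) else 1) ∂P = er P h := by
  have hs : MeasurableSet {p : X × Bool | h p.1 ≠ p.2} := (measurableSet_agree hm).compl
  have heq : (fun p : X × Bool => if h p.1 = p.2 then (0:ℝ) else 1)
      = Set.indicator {p : X × Bool | h p.1 ≠ p.2} (fun _ => 1) := by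
    funext p; by_cases hp : h p.1 = p.2 <;> simp [Set.indicator, hp]
  rw [heq, integral_indicator_const (1:ℝ) hs, er, smul_eq_mul, mul_one, measureReal_def]

lemma measurable_empErr {n : ℕ} {h : X → Bool} (hm : Measurable h) :
    Measurable (fun S : Fin n → X × Bool => empErr S h) := by
  unfold empErr
  exact (Finset.measurable_sum _ fun i _ =>
    (measurable_errInd hm).comp (measurable_pi_apply i)).const_mul _

lemma chernoff (P : Measure (X × Bool)) [IsProbabilityMeasure P]
    {h hs : X → Bool} (hm : Measurable h) (hms : Measurable hs) (n : ℕ)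
    (hgap : 0 ≤ er P h - er P hs) :
    (sampleMeasure P n {S | empErr S h ≤ empErr S hs}).toReal
      ≤ Real.exp (-((er P h - er P hs) ^ 2 / 4) * n) := by
  classical
  set γ := er P h - er P hs with hγdef
  have hγ1 : γ ≤ 1 := by
    have h1 := er_le_one P h
    have h2 := er_nonneg P hs
    simp only [hγdef]; linarith
  set t := γ / 2 with htdef
  have ht0 : 0 ≤ t := by simp only [htdef]; linarith
  have ht1 : t ≤ 1 := by simp only [htdef]; linarith
  set Z : X × Bool → ℝ := fun p =>
    (if h p.1 = p.2 then (0:ℝ) else 1) - (if hs p.1 = p.2 then (0:ℝ) else 1) with hZdef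
  have hZm : Measurable Z := (measurable_errInd hm).sub (measurable_errInd hms)
  have hZb : ∀ p, |Z p| ≤ 1 := by
    intro p; simp only [hZdef]; split_ifs <;> norm_num
  have hZint : Integrable Z P :=
    (integrable_const (1:ℝ)).mono' hZm.aestronglyMeasurable (ae_of_all _ hZb)
  have hZval : ∫ p, Z p ∂P = γ := by
    simp only [hZdef]
    rw [integral_sub ((integrable_const (1:ℝ)).mono' (measurable_errInd hm).aestronglyMeasurable
        (ae_of_all _ (fun p => by split_ifs <;> norm_num)))
      ((integrable_const (1:ℝ)).mono' (measurable_errInd hms).aestronglyMeasurable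
        (ae_of_all _ (fun p => by split_ifs <;> norm_num))),
      integral_errInd P hm, integral_errInd P hms]
  set φ : X × Bool → ℝ := fun p => Real.exp (-t * Z p) with hφdef
  have hφm : Measurable φ := (hZm.const_mul (-t)).exp
  have hφpos : ∀ p, 0 < φ p := fun p => Real.exp_pos _
  have hφle : ∀ p, φ p ≤ Real.exp t := by
    intro p
    apply Real.exp_le_exp.2
    have := hZb p
    have := abs_le.1 (hZb p)
    nlinarith
  have hφint : Integrable φ P :=
    (integrable_const (Real.exp t)).mono' hφm.aestronglyMeasurable
      (ae_of_all _ (fun p => by rw [Real.norm_eq_abs, abs_of_pos (hφpos p)]; exact hφle p))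
  have key1 : ∫ p, φ p ∂P ≤ 1 - γ ^ 2 / 4 := by
    have hpt : ∀ p, φ p ≤ (1 + t ^ 2) - t * Z p := by
      intro p
      have hu : |(-t) * Z p| ≤ 1 := by
        rw [abs_mul, abs_neg, abs_of_nonneg ht0]
        calc t * |Z p| ≤ 1 * 1 := by
              apply mul_le_mul ht1 (hZb p) (abs_nonneg _) zero_le_one
          _ = 1 := by ring
      have hq := exp_le_quad hu
      have hsq : ((-t) * Z p) ^ 2 ≤ t ^ 2 := by
        have h2 := abs_le.1 (hZb p)
        have hZ2 : Z p ^ 2 ≤ 1 := by nlinarith [h2.1, h2.2]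
        calc ((-t) * Z p) ^ 2 = t ^ 2 * Z p ^ 2 := by ring
          _ ≤ t ^ 2 * 1 := by nlinarith [sq_nonneg t]
          _ = t ^ 2 := by ring
      simp only [hφdef]
      nlinarith
    calc ∫ p, φ p ∂P ≤ ∫ p, ((1 + t ^ 2) - t * Z p) ∂P :=
          integral_mono hφint ((integrable_const _).sub (hZint.const_mul t)) hpt
      _ = (1 + t ^ 2) - t * γ := by
          rw [integral_sub (integrable_const _) (hZint.const_mul t), integral_const,
            integral_const_mul, hZval]
          simp [measure_univ, measureReal_def]
      _ = 1 - γ ^ 2 / 4 := by simp only [htdef]; ring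
  have key2 : ∫ p, φ p ∂P ≤ Real.exp (-(γ ^ 2 / 4)) := by
    have := Real.add_one_le_exp (-(γ ^ 2 / 4))
    linarith
  have hint0 : 0 ≤ ∫ p, φ p ∂P := integral_nonneg fun p => (hφpos p).le
  have hBmeas : MeasurableSet {S : Fin n → X × Bool | empErr S h ≤ empErr S hs} :=
    measurableSet_le (measurable_empErr hm) (measurable_empErr hms)
  haveI : IsProbabilityMeasure (sampleMeasure P n) := by
    unfold sampleMeasure; infer_instance
  have hprodm : Measurable (fun S : Fin n → X × Bool => ∏ i, φ (S i)) :=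
    Finset.measurable_prod _ fun i _ => hφm.comp (measurable_pi_apply i)
  have hprodint : Integrable (fun S : Fin n → X × Bool => ∏ i, φ (S i)) (sampleMeasure P n) := by
    refine (integrable_const ((Real.exp t) ^ n)).mono' hprodm.aestronglyMeasurable
      (ae_of_all _ (fun S => ?_))
    rw [Real.norm_eq_abs, abs_of_pos (Finset.prod_pos fun i _ => hφpos _)]
    calc ∏ i, φ (S i) ≤ ∏ _i : Fin n, Real.exp t :=
          Finset.prod_le_prod (fun i _ => (hφpos _).le) (fun i _ => hφle _)
      _ = (Real.exp t) ^ n := by rw [Finset.prod_const, Finset.card_univ, Fintype.card_fin]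
  have hmono : ∀ S : Fin n → X × Bool,
      Set.indicator {S : Fin n → X × Bool | empErr S h ≤ empErr S hs}
        (fun _ => (1:ℝ)) S ≤ ∏ i, φ (S i) := by
    intro S
    by_cases hS : S ∈ {S : Fin n → X × Bool | empErr S h ≤ empErr S hs}
    · have hS' : empErr S h ≤ empErr S hs := hS
      have hsum : ∑ i, Z (S i) ≤ 0 := by
        have hdiff : empErr S h - empErr S hs = (1 / (n:ℝ)) * ∑ i, Z (S i) := by
          simp only [empErr, hZdef]
          rw [← mul_sub, ← Finset.sum_sub_distrib]
        rcases Nat.eq_zero_or_pos n with h0 | hpos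
        · subst h0; simp
        · have hn : (0:ℝ) < 1 / (n:ℝ) := by positivity
          by_contra hcon
          push_neg at hcon
          nlinarith
      have hprod : ∏ i, φ (S i) = Real.exp (∑ i, -t * Z (S i)) := by
        rw [Real.exp_sum]
      rw [Set.indicator_of_mem hS, hprod]
      have hsum2 : 0 ≤ ∑ i, -t * Z (S i) := by
        have : ∑ i, -t * Z (S i) = -t * ∑ i, Z (S i) := by rw [Finset.mul_sum]
        rw [this]
        nlinarith
      calc (1:ℝ) = Real.exp 0 := by rw [Real.exp_zero]
        _ ≤ _ := Real.exp_le_exp.2 hsum2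
    · rw [Set.indicator_of_notMem hS]
      exact (Finset.prod_pos fun i _ => hφpos _).le
  have hmeasbound : (sampleMeasure P n {S | empErr S h ≤ empErr S hs}).toReal
      ≤ ∫ S, ∏ i, φ (S i) ∂ sampleMeasure P n := by
    have hind : ∫ S, Set.indicator {S : Fin n → X × Bool | empErr S h ≤ empErr S hs}
        (fun _ => (1:ℝ)) S ∂ sampleMeasure P n
        = (sampleMeasure P n {S | empErr S h ≤ empErr S hs}).toReal := by
      rw [integral_indicator_const (1:ℝ) hBmeas, smul_eq_mul, mul_one, measureReal_def]
    rw [← hind]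
    exact integral_mono ((integrable_const (1:ℝ)).indicator hBmeas) hprodint hmono
  have hfub : ∫ S, ∏ i, φ (S i) ∂ sampleMeasure P n = (∫ p, φ p ∂P) ^ n := by
    letI : MeasureSpace (X × Bool) := ⟨P⟩
    have hvol : sampleMeasure P n = (volume : Measure (Fin n → X × Bool)) := by
      rw [MeasureTheory.volume_pi]; rfl
    rw [hvol]
    have := MeasureTheory.integral_fintype_prod_eq_pow (ι := Fin n) φ (μ := P)
    rw [Fintype.card_fin] at this; exact this
  calc (sampleMeasure P n {S | empErr S h ≤ empErr S hs}).toReal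
      ≤ ∫ S, ∏ i, φ (S i) ∂ sampleMeasure P n := hmeasbound
    _ = (∫ p, φ p ∂P) ^ n := hfub
    _ ≤ (Real.exp (-(γ ^ 2 / 4))) ^ n := pow_le_pow_left₀ hint0 key2 n
    _ = Real.exp (-(γ ^ 2 / 4) * n) := by
        rw [← Real.exp_nat_mul]; ring_nf

end AuxLemmas


theorem upper_bound_aux {X : Type*} [MeasurableSpace X]
    (H : Set (X → Bool)) (hmeas : ∀ h ∈ H, Measurable h)
    (hfin : H.Finite) (hne : H.Nonempty) :
    LearnableAtRate H (fun n => Real.exp (-(n : ℝ))) := by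
  classical
  obtain ⟨h0, h0H⟩ := hne
  set L : List (X → Bool) := hfin.toFinset.toList with hLdef
  have hLmem : ∀ g ∈ L, g ∈ H := by
    intro g hg
    rw [hLdef, Finset.mem_toList, Set.Finite.mem_toFinset] at hg
    exact hg
  have hLmem' : ∀ g ∈ H, g ∈ L := by
    intro g hg
    rw [hLdef, Finset.mem_toList, Set.Finite.mem_toFinset]
    exact hg
  set m := L.length with hmdef
  have hm0 : 0 < m := List.length_pos_iff.2 (List.ne_nil_of_mem (hLmem' h0 h0H))
  have hgetD : ∀ j, L.getD j h0 ∈ H := by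
    intro j
    by_cases hj : j < m
    · apply hLmem
      rw [List.getD_eq_getElem _ _ hj]
      exact List.getElem_mem _
    · rw [List.getD_eq_default _ _ (not_lt.1 hj)]
      exact h0H
  have hgm : ∀ j, Measurable (L.getD j h0) := fun j => hmeas _ (hgetD j)
  have exQ : ∀ {n : ℕ} (S : Fin n → X × Bool), ∃ j, j < m ∧
      ∀ k < m, empErr S (L.getD j h0) ≤ empErr S (L.getD k h0) := by
    intro n S
    obtain ⟨j, hj, hmin⟩ := Finset.exists_min_image (Finset.range m)
      (fun j => empErr S (L.getD j h0)) ⟨0, Finset.mem_range.2 hm0⟩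
    exact ⟨j, Finset.mem_range.1 hj, fun k hk => hmin k (Finset.mem_range.2 hk)⟩
  have hidxm : ∀ (n : ℕ) (j : ℕ),
      MeasurableSet {S : Fin n → X × Bool | Nat.find (exQ S) = j} := by
    intro n j
    have hQm : ∀ i : ℕ, MeasurableSet {S : Fin n → X × Bool |
        i < m ∧ ∀ k < m, empErr S (L.getD i h0) ≤ empErr S (L.getD k h0)} := by
      intro i
      by_cases him : i < m
      · have heq : {S : Fin n → X × Bool |
            i < m ∧ ∀ k < m, empErr S (L.getD i h0) ≤ empErr S (L.getD k h0)}
            = ⋂ (k : ℕ) (_ : k < m),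
                {S : Fin n → X × Bool | empErr S (L.getD i h0) ≤ empErr S (L.getD k h0)} := by
          ext S; simp [him, Set.mem_iInter]
        rw [heq]
        exact MeasurableSet.iInter fun k => MeasurableSet.iInter fun _ =>
          measurableSet_le (measurable_empErr (hgm i)) (measurable_empErr (hgm k))
      · have heq : {S : Fin n → X × Bool |
            i < m ∧ ∀ k < m, empErr S (L.getD i h0) ≤ empErr S (L.getD k h0)} = ∅ := by
          ext S; simp [him]
        rw [heq]; exact MeasurableSet.empty
    have heq : {S : Fin n → X × Bool | Nat.find (exQ S) = j}
        = {S : Fin n → X × Bool |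
            j < m ∧ ∀ k < m, empErr S (L.getD j h0) ≤ empErr S (L.getD k h0)}
          ∩ ⋂ (i : ℕ) (_ : i < j), {S : Fin n → X × Bool |
              i < m ∧ ∀ k < m, empErr S (L.getD i h0) ≤ empErr S (L.getD k h0)}ᶜ := by
      ext S
      rw [Set.mem_setOf_eq, Nat.find_eq_iff (exQ S)]
      simp [Set.mem_iInter, Set.mem_compl_iff]
    rw [heq]
    exact (hQm j).inter (MeasurableSet.iInter fun i =>
      MeasurableSet.iInter fun _ => (hQm i).compl)
  refine ⟨fun n S x => L.getD (Nat.find (exQ S)) h0 x, ?_, ?_⟩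
  · -- IsLearningAlg
    intro n
    have hmeasf : Measurable (fun p : (Fin n → X × Bool) × X =>
        L.getD (Nat.find (exQ p.1)) h0 p.2) := by
      apply measurable_to_countable'
      intro b
      have heq : (fun p : (Fin n → X × Bool) × X => L.getD (Nat.find (exQ p.1)) h0 p.2) ⁻¹' {b}
          = ⋃ (j : ℕ) (_ : j < m),
              ({S : Fin n → X × Bool | Nat.find (exQ S) = j} ×ˢ {x | L.getD j h0 x = b}) := by
        ext ⟨S, x⟩
        simp only [Set.mem_preimage, Set.mem_singleton_iff, Set.mem_iUnion, Set.mem_prod,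
          Set.mem_setOf_eq]
        constructor
        · intro hb
          exact ⟨Nat.find (exQ S), (Nat.find_spec (exQ S)).1, ⟨rfl, hb⟩⟩
        · rintro ⟨j, hj, hjeq, hb⟩
          rw [hjeq]; exact hb
      rw [heq]
      exact MeasurableSet.iUnion fun j => MeasurableSet.iUnion fun _ =>
        (hidxm n j).prod ((hgm j) (measurableSet_singleton b))
    exact fun μ _ => hmeasf.nullMeasurable
  · intro P hP
    haveI := hP
    obtain ⟨hstar, hstarH, hstar_eq⟩ : ∃ h ∈ H, er P h = optErr P H := by
      have h1 : sInf ((er P) '' H) ∈ (er P) '' H :=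
        Set.Nonempty.csInf_mem ((Set.nonempty_of_mem h0H).image _) (hfin.image _)
      obtain ⟨h, hH, heq⟩ := h1
      exact ⟨h, hH, heq⟩
    have hopt_le : ∀ h ∈ H, optErr P H ≤ er P h := fun h hH =>
      csInf_le (hfin.image _).bddBelow ⟨h, hH, rfl⟩
    have hopt0 : 0 ≤ optErr P H := hstar_eq ▸ er_nonneg P hstar
    have key : ∀ n : ℕ, excess P H (fun n S x => L.getD (Nat.find (exQ S)) h0 x) n
        ≤ ∑ g ∈ hfin.toFinset, (er P g - optErr P H) *
            ((sampleMeasure P n) {S | empErr S g ≤ empErr S hstar}).toReal := by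
      intro n
      haveI : IsProbabilityMeasure (sampleMeasure P n) := by
        unfold sampleMeasure; infer_instance
      set pk : (Fin n → X × Bool) → (X → Bool) :=
        fun S => L.getD (Nat.find (exQ S)) h0 with hpkdef
      have hpkH : ∀ S, pk S ∈ hfin.toFinset := fun S =>
        (Set.Finite.mem_toFinset hfin).2 (hgetD _)
      have hpkmin : ∀ S, ∀ g ∈ H, empErr S (pk S) ≤ empErr S g := by
        intro S g hg
        obtain ⟨k, hk, hkeq⟩ := List.mem_iff_getElem.mp (hLmem' g hg)
        have := (Nat.find_spec (exQ S)).2 k hk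
        rwa [List.getD_eq_getElem _ _ hk, hkeq] at this
      have hidxmeas : Measurable (fun S : Fin n → X × Bool => Nat.find (exQ S)) :=
        measurable_to_countable' (fun j => hidxm n j)
      have herm : Measurable (fun S : Fin n → X × Bool => er P (pk S)) := by
        have heq : (fun S : Fin n → X × Bool => er P (pk S))
            = (fun j : ℕ => er P (L.getD j h0)) ∘ (fun S => Nat.find (exQ S)) := rfl
        rw [heq]
        exact measurable_from_top.comp hidxmeas
      have herint : Integrable (fun S => er P (pk S)) (sampleMeasure P n) :=
        (integrable_const (1:ℝ)).mono' herm.aestronglyMeasurable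
          (ae_of_all _ fun S => by
            rw [Real.norm_eq_abs, abs_of_nonneg (er_nonneg _ _)]; exact er_le_one P _)
      have hBmeas : ∀ g ∈ hfin.toFinset,
          MeasurableSet {S : Fin n → X × Bool | empErr S g ≤ empErr S hstar} := fun g hg =>
        measurableSet_le (measurable_empErr (hmeas g ((Set.Finite.mem_toFinset hfin).1 hg)))
          (measurable_empErr (hmeas hstar hstarH))
      have hpoint : ∀ S : Fin n → X × Bool, er P (pk S) - optErr P H
          ≤ ∑ g ∈ hfin.toFinset, (er P g - optErr P H) *
              Set.indicator {S' : Fin n → X × Bool | empErr S' g ≤ empErr S' hstar}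
                (fun _ => (1:ℝ)) S := by
        intro S
        have hmem : S ∈ {S' : Fin n → X × Bool | empErr S' (pk S) ≤ empErr S' hstar} :=
          hpkmin S hstar hstarH
        have hterm : (er P (pk S) - optErr P H) *
            Set.indicator {S' : Fin n → X × Bool | empErr S' (pk S) ≤ empErr S' hstar}
              (fun _ => (1:ℝ)) S = er P (pk S) - optErr P H := by
          rw [Set.indicator_of_mem hmem, mul_one]
        rw [← hterm]
        refine Finset.single_le_sum (f := fun g => (er P g - optErr P H) *
            Set.indicator {S' : Fin n → X × Bool | empErr S' g ≤ empErr S' hstar}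
              (fun _ => (1:ℝ)) S) (fun g hg => ?_) (hpkH S)
        refine mul_nonneg ?_ ?_
        · have := hopt_le g ((Set.Finite.mem_toFinset hfin).1 hg); linarith
        · exact Set.indicator_nonneg (fun _ _ => zero_le_one) S
      have hRint : Integrable (fun S : Fin n → X × Bool =>
          ∑ g ∈ hfin.toFinset, (er P g - optErr P H) *
            Set.indicator {S' : Fin n → X × Bool | empErr S' g ≤ empErr S' hstar}
              (fun _ => (1:ℝ)) S) (sampleMeasure P n) :=
        integrable_finset_sum _ fun g hg =>
          (((integrable_const (1:ℝ)).indicator (hBmeas g hg)).const_mul _)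
      have hexp : excess P H (fun n S x => L.getD (Nat.find (exQ S)) h0 x) n
          = ∫ S, (er P (pk S) - optErr P H) ∂ sampleMeasure P n := by
        simp only [excess, expErr]
        rw [integral_sub herint (integrable_const _), integral_const]
        simp only [measureReal_def, measure_univ, ENNReal.toReal_one, smul_eq_mul, one_mul, sub_left_inj]; rfl
      rw [hexp]
      calc ∫ S, (er P (pk S) - optErr P H) ∂ sampleMeasure P n
          ≤ ∫ S, (∑ g ∈ hfin.toFinset, (er P g - optErr P H) *
              Set.indicator {S' : Fin n → X × Bool | empErr S' g ≤ empErr S' hstar}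
                (fun _ => (1:ℝ)) S) ∂ sampleMeasure P n :=
            integral_mono (herint.sub (integrable_const _)) hRint hpoint
        _ = ∑ g ∈ hfin.toFinset, (er P g - optErr P H) *
              ((sampleMeasure P n) {S | empErr S g ≤ empErr S hstar}).toReal := by
            rw [integral_finset_sum _ fun g hg =>
              ((integrable_const (1:ℝ)).indicator (hBmeas g hg)).const_mul _]
            refine Finset.sum_congr rfl fun g hg => ?_
            rw [integral_const_mul, integral_indicator_const (1:ℝ) (hBmeas g hg),
              smul_eq_mul, mul_one, measureReal_def]
    by_cases hpe : (hfin.toFinset.filter (fun h => 0 < er P h - optErr P H)).Nonempty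
    case neg =>
      refine ⟨1, one_pos, 1, one_pos, fun n => ?_⟩
      have hterm : ∀ g ∈ hfin.toFinset, (er P g - optErr P H) *
          ((sampleMeasure P n) {S | empErr S g ≤ empErr S hstar}).toReal ≤ 0 := by
        intro g hg
        have hg0 : ¬ 0 < er P g - optErr P H := by
          intro hcon
          exact hpe ⟨g, Finset.mem_filter.2 ⟨hg, hcon⟩⟩
        exact mul_nonpos_of_nonpos_of_nonneg (not_lt.1 hg0) ENNReal.toReal_nonneg
      have hneg := (key n).trans (Finset.sum_nonpos hterm)
      calc excess P H (fun n S x => L.getD (Nat.find (exQ S)) h0 x) n ≤ 0 := hneg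
        _ ≤ 1 * Real.exp (-(⌈(1:ℝ) * (n:ℝ)⌉₊ : ℝ)) := by positivity
    case pos =>
      set c := ((hfin.toFinset.filter (fun h => 0 < er P h - optErr P H)).image
        (fun h => (er P h - optErr P H) ^ 2 / 4)).min'
          (hpe.image (fun h => (er P h - optErr P H) ^ 2 / 4)) with hcdef
      have hcmem := Finset.min'_mem _ (hpe.image (fun h => (er P h - optErr P H) ^ 2 / 4))
      have hcpos : 0 < c := by
        rw [hcdef]
        obtain ⟨h, hh, heq⟩ := Finset.mem_image.1 hcmem
        rw [← heq]
        have := (Finset.mem_filter.1 hh).2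
        positivity
      have hcle : ∀ h ∈ hfin.toFinset.filter (fun h => 0 < er P h - optErr P H),
          c ≤ (er P h - optErr P H) ^ 2 / 4 := fun h hh =>
        Finset.min'_le _ _ (Finset.mem_image_of_mem _ hh)
      refine ⟨(hfin.toFinset.card : ℝ) * Real.exp 1 + 1, by positivity, c, hcpos, fun n => ?_⟩
      have hch : ∀ g ∈ hfin.toFinset, (er P g - optErr P H) *
          ((sampleMeasure P n) {S | empErr S g ≤ empErr S hstar}).toReal
            ≤ Real.exp (-c * n) := by
        intro g hg
        have hgH : g ∈ H := (Set.Finite.mem_toFinset hfin).1 hg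
        rcases le_or_gt (er P g - optErr P H) 0 with hle | hlt
        · exact (mul_nonpos_of_nonpos_of_nonneg hle ENNReal.toReal_nonneg).trans
            (Real.exp_pos _).le
        · have hgap1 : er P g - optErr P H ≤ 1 := by
            have := er_le_one P g; linarith
          have hB : ((sampleMeasure P n) {S | empErr S g ≤ empErr S hstar}).toReal
              ≤ Real.exp (-((er P g - optErr P H) ^ 2 / 4) * n) := by
            have hgap' : 0 ≤ er P g - er P hstar := by rw [hstar_eq]; exact hlt.le
            have hc2 := chernoff P (hmeas g hgH) (hmeas hstar hstarH) n hgap'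
            rwa [hstar_eq] at hc2
          calc (er P g - optErr P H) *
              ((sampleMeasure P n) {S | empErr S g ≤ empErr S hstar}).toReal
              ≤ 1 * Real.exp (-((er P g - optErr P H) ^ 2 / 4) * n) :=
                mul_le_mul hgap1 hB ENNReal.toReal_nonneg one_pos.le
            _ = Real.exp (-((er P g - optErr P H) ^ 2 / 4) * n) := one_mul _
            _ ≤ Real.exp (-c * n) := by
                apply Real.exp_le_exp.2
                have hc' := hcle g (Finset.mem_filter.2 ⟨hg, hlt⟩)
                have hn0 : (0:ℝ) ≤ n := Nat.cast_nonneg n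
                nlinarith
      have hmain : excess P H (fun n S x => L.getD (Nat.find (exQ S)) h0 x) n
          ≤ (hfin.toFinset.card : ℝ) * Real.exp (-c * n) := by
        refine (key n).trans ((Finset.sum_le_sum hch).trans ?_)
        rw [Finset.sum_const, nsmul_eq_mul]
      have hceil : (⌈c * (n:ℝ)⌉₊ : ℝ) ≤ c * n + 1 :=
        (Nat.ceil_lt_add_one (by positivity)).le
      have hee : Real.exp (-(c * n) - 1) ≤ Real.exp (-(⌈c * (n:ℝ)⌉₊ : ℝ)) :=
        Real.exp_le_exp.2 (by linarith)
      have hprod : (hfin.toFinset.card : ℝ) * Real.exp 1 * Real.exp (-(c*n) - 1)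
          = (hfin.toFinset.card : ℝ) * Real.exp (-c * n) := by
        rw [mul_assoc, ← Real.exp_add]
        ring_nf
      calc excess P H (fun n S x => L.getD (Nat.find (exQ S)) h0 x) n
          ≤ (hfin.toFinset.card : ℝ) * Real.exp (-c * n) := hmain
        _ = (hfin.toFinset.card : ℝ) * Real.exp 1 * Real.exp (-(c*n) - 1) := hprod.symm
        _ ≤ ((hfin.toFinset.card : ℝ) * Real.exp 1 + 1) * Real.exp (-(⌈c * (n:ℝ)⌉₊ : ℝ)) := by
            nlinarith [Real.exp_pos (-(⌈c * (n:ℝ)⌉₊ : ℝ)), hee,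
              Real.exp_pos (-(c*n) - 1),
              mul_le_mul_of_nonneg_left hee
                (by positivity : (0:ℝ) ≤ (hfin.toFinset.card : ℝ) * Real.exp 1)]

theorem lower_bound_aux {X : Type*} [MeasurableSpace X] [MeasurableSingletonClass X]
    (H : Set (X → Bool)) (hnt : H.Nontrivial) :
    NotLearnableFasterThan H (fun n => Real.exp (-(n : ℝ))) := by
  classical
  obtain ⟨g1, hg1, g2, hg2, hgne⟩ := hnt
  obtain ⟨x0, hx0⟩ : ∃ x, g1 x ≠ g2 x := Function.ne_iff.mp hgne
  set v : Bool → Bool → ℝ := fun b u => if u = b then 3/4 else 1/4 with hvdef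
  have hv0 : ∀ b u, 0 ≤ v b u := by
    intro b u; simp only [hvdef]; split_ifs <;> norm_num
  have hv1 : ∀ b u, v b u ≤ 1 := by
    intro b u; simp only [hvdef]; split_ifs <;> norm_num
  have hvsum : ∀ b, v b true + v b false = 1 := by
    intro b; cases b <;> simp [hvdef] <;> norm_num
  set P : Bool → Measure (X × Bool) := fun b =>
    ENNReal.ofReal (v b true) • Measure.dirac ((x0, true) : X × Bool)
      + ENNReal.ofReal (v b false) • Measure.dirac ((x0, false) : X × Bool) with hPdef
  have hPprob : ∀ b, IsProbabilityMeasure (P b) := by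
    intro b
    constructor
    rw [hPdef]
    simp only [Measure.add_apply, Measure.smul_apply, measure_univ, smul_eq_mul, mul_one]
    rw [← ENNReal.ofReal_add (hv0 b true) (hv0 b false), hvsum b, ENNReal.ofReal_one]
  have her : ∀ (b : Bool) (g : X → Bool), er (P b) g = v b (!(g x0)) := by
    intro b g
    rw [er, hPdef]
    simp only [Measure.add_apply, Measure.smul_apply, Measure.dirac_apply, smul_eq_mul]
    cases hgx : g x0
    · have h1 : ((x0, true) : X × Bool) ∈ {p : X × Bool | g p.1 ≠ p.2} := by
        simp [hgx]
      have h2 : ((x0, false) : X × Bool) ∉ {p : X × Bool | g p.1 ≠ p.2} := by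
        simp [hgx]
      rw [Set.indicator_of_mem h1, Set.indicator_of_notMem h2]
      simp [ENNReal.toReal_ofReal (hv0 b true)]
    · have h1 : ((x0, true) : X × Bool) ∉ {p : X × Bool | g p.1 ≠ p.2} := by
        simp [hgx]
      have h2 : ((x0, false) : X × Bool) ∈ {p : X × Bool | g p.1 ≠ p.2} := by
        simp [hgx]
      rw [Set.indicator_of_mem h2, Set.indicator_of_notMem h1]
      simp [ENNReal.toReal_ofReal (hv0 b false)]
  have hvnb : ∀ b : Bool, v b (!b) = 1/4 := by
    intro b; cases b <;> simp [hvdef] <;> norm_num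
  have hopt : ∀ b, optErr (P b) H = 1/4 := by
    intro b
    have hex : ∃ h ∈ H, h x0 = b := by
      by_cases hb : g1 x0 = b
      · exact ⟨g1, hg1, hb⟩
      · refine ⟨g2, hg2, ?_⟩
        revert hx0 hb
        cases hb1 : g1 x0 <;> cases hb2 : g2 x0 <;> cases b <;> simp
    obtain ⟨hb, hbH, hbx⟩ := hex
    apply le_antisymm
    · apply csInf_le
      · refine ⟨1/4, ?_⟩
        rintro z ⟨h, hH, rfl⟩
        show (1:ℝ)/4 ≤ er (P b) h
        rw [her b h]
        cases hbx' : (!(h x0)) <;> simp [hvdef] <;> split_ifs <;> norm_num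
      · exact ⟨hb, hbH, show er (P b) hb = 1/4 by rw [her b hb, hbx, hvnb b]⟩
    · refine le_csInf ⟨er (P b) g1, g1, hg1, rfl⟩ ?_
      rintro z ⟨h, hH, rfl⟩
      show (1:ℝ)/4 ≤ er (P b) h
      rw [her b h]
      cases hbx' : (!(h x0)) <;> simp [hvdef] <;> split_ifs <;> norm_num
  refine ⟨1/4, by norm_num, 2, by norm_num, ?_⟩
  intro f hf
  have key : ∀ n : ℕ, (1/4 : ℝ) * Real.exp (-(2 * (n:ℝ))) ≤ excess (P true) H f n
      ∨ (1/4 : ℝ) * Real.exp (-(2 * (n:ℝ))) ≤ excess (P false) H f n := by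
    intro n
    have hdec : ∀ b, sampleMeasure (P b) n
        = ∑ y : Fin n → Bool, (∏ i, ENNReal.ofReal (v b (y i))) •
            Measure.dirac (fun i => ((x0, y i) : X × Bool)) := by
      intro b
      have hpp := pi_pair_dirac n (fun u => ((x0, u) : X × Bool))
        (fun u => ENNReal.ofReal (v b u)) (fun u => ENNReal.ofReal_ne_top)
      rw [sampleMeasure, hPdef]
      exact hpp
    set V : Bool → (Fin n → Bool) → ℝ := fun b y => ∏ i, v b (y i) with hVdef
    have hV0 : ∀ b y, 0 ≤ V b y := fun b y =>
      Finset.prod_nonneg fun i _ => hv0 b (y i)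
    have hexp : ∀ b, expErr (P b) f n
        = ∑ y : Fin n → Bool, V b y * v b (!(f n (fun i => (x0, y i)) x0)) := by
      intro b
      rw [expErr, hdec b, integral_finset_sum_measure ?_]
      · refine Finset.sum_congr rfl fun y _ => ?_
        rw [integral_smul_measure, integral_dirac, her b, ENNReal.toReal_prod]
        have hpr : (∏ i, (ENNReal.ofReal (v b (y i))).toReal) = V b y :=
          Finset.prod_congr rfl fun i _ => ENNReal.toReal_ofReal (hv0 b (y i))
        rw [hpr, smul_eq_mul]
      · intro y _
        refine Integrable.smul_measure ?_ ?_
        · have hae : (fun S => er (P b) (f n S))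
              =ᵐ[Measure.dirac (fun i => ((x0, y i) : X × Bool))]
                (fun _ => er (P b) (f n (fun i => ((x0, y i) : X × Bool)))) := by
            rw [ae_dirac_eq]
            exact Filter.eventually_pure.2 rfl
          exact (integrable_const _).congr hae.symm
        · exact (ENNReal.prod_lt_top fun i _ => ENNReal.ofReal_lt_top).ne
    set A : (Fin n → Bool) → ℝ :=
      fun y => if f n (fun i => ((x0, y i) : X × Bool)) x0 then 1 else 0 with hAdef
    have hA0 : ∀ y, 0 ≤ A y := by
      intro y; simp only [hAdef]; split_ifs <;> norm_num
    have hA1 : ∀ y, A y ≤ 1 := by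
      intro y; simp only [hAdef]; split_ifs <;> norm_num
    set q : Bool → ℝ := fun b => ∑ y, V b y * A y with hqdef
    have hVsum : ∀ b, ∑ y : Fin n → Bool, V b y = 1 := by
      intro b
      have h1 : ∑ y : Fin n → Bool, V b y = ∏ _i : Fin n, (∑ u : Bool, v b u) := by
        rw [hVdef]
        exact (Fintype.prod_sum (fun (_i : Fin n) (u : Bool) => v b u)).symm
      rw [h1]
      simp [hvsum b]
    have hvval : ∀ (b : Bool) (u : Bool), v b (!u) = if u = b then 1/4 else 3/4 := by
      intro b u; cases b <;> cases u <;> simp [hvdef]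
    have hexc_t : excess (P true) H f n = 1/2 - q true / 2 := by
      rw [excess, hexp true, hopt true, hqdef]
      have hterm : ∀ y : Fin n → Bool, V true y * v true (!(f n (fun i => (x0, y i)) x0))
          = V true y * (3/4) - (1/2) * (V true y * A y) := by
        intro y
        cases hc : f n (fun i => ((x0, y i) : X × Bool)) x0 <;>
          simp [hvdef, hAdef, hc] <;> ring
      rw [Finset.sum_congr rfl fun y _ => hterm y, Finset.sum_sub_distrib,
        ← Finset.sum_mul, ← Finset.mul_sum, hVsum true]
      ring
    have hexc_f : excess (P false) H f n = q false / 2 := by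
      rw [excess, hexp false, hopt false, hqdef]
      have hterm : ∀ y : Fin n → Bool, V false y * v false (!(f n (fun i => (x0, y i)) x0))
          = V false y * (1/4) + (1/2) * (V false y * A y) := by
        intro y
        cases hc : f n (fun i => ((x0, y i) : X × Bool)) x0 <;>
          simp [hvdef, hAdef, hc] <;> ring
      rw [Finset.sum_congr rfl fun y _ => hterm y, Finset.sum_add_distrib,
        ← Finset.sum_mul, ← Finset.mul_sum, hVsum false]
      ring
    have hq0 : 0 ≤ q true := Finset.sum_nonneg fun y _ => mul_nonneg (hV0 true y) (hA0 y)
    have hq1 : q true ≤ 1 := by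
      rw [hqdef, ← hVsum true]
      exact Finset.sum_le_sum fun y _ => by
        have := hA1 y; have := hV0 true y; nlinarith
    have hratio : (1/3 : ℝ)^n * q true ≤ q false := by
      rw [hqdef, Finset.mul_sum]
      refine Finset.sum_le_sum fun y _ => ?_
      have hVr : (1/3 : ℝ)^n * V true y ≤ V false y := by
        have h1 : (1/3 : ℝ)^n * V true y = ∏ i : Fin n, ((1/3) * v true (y i)) := by
          rw [Finset.prod_mul_distrib, Finset.prod_const, Finset.card_univ, Fintype.card_fin,
            hVdef]
        rw [h1, hVdef]
        refine Finset.prod_le_prod (fun i _ => by have := hv0 true (y i); linarith) ?_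
        intro i _
        cases hyi : y i <;> simp [hvdef] <;> norm_num
      calc (1/3 : ℝ)^n * (V true y * A y) = ((1/3)^n * V true y) * A y := by ring
        _ ≤ V false y * A y := mul_le_mul_of_nonneg_right hVr (hA0 y)
    have hexpn : Real.exp (-(2 * (n:ℝ))) ≤ (1/3 : ℝ)^n := by
      have h3 : Real.exp (-2 : ℝ) ≤ 1/3 := by
        rw [Real.exp_neg]
        have h4 : (3:ℝ) ≤ Real.exp 2 := by
          have := Real.add_one_le_exp (2:ℝ); linarith
        have hp := Real.exp_pos 2
        have hinv : (0:ℝ) ≤ (Real.exp 2)⁻¹ := by positivity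
        have hmc : (Real.exp 2)⁻¹ * Real.exp 2 = 1 := inv_mul_cancel₀ (ne_of_gt hp)
        nlinarith
      calc Real.exp (-(2 * (n:ℝ))) = (Real.exp (-2))^n := by
            rw [← Real.exp_nat_mul]; ring_nf
        _ ≤ (1/3)^n := pow_le_pow_left₀ (Real.exp_pos _).le h3 n
    by_cases hq : q true ≤ 1/2
    · left
      rw [hexc_t]
      have hle1 : Real.exp (-(2 * (n:ℝ))) ≤ 1 := Real.exp_le_one_iff.2 (by have : (0:ℝ) ≤ (n:ℝ) := Nat.cast_nonneg n; linarith)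
      linarith
    · right
      rw [hexc_f]
      push_neg at hq
      have h5 : (1/3 : ℝ)^n * (1/2) ≤ q false := by
        refine le_trans ?_ hratio
        have : (0:ℝ) ≤ (1/3:ℝ)^n := by positivity
        nlinarith
      nlinarith [hexpn, h5]
  have hcast : ∀ n : ℕ, (⌈(2:ℝ) * (n:ℝ)⌉₊ : ℝ) = 2 * (n:ℝ) := by
    intro n
    have : (2:ℝ) * (n:ℝ) = ((2 * n : ℕ) : ℝ) := by push_cast; ring
    rw [this, Nat.ceil_natCast]
  by_cases hfreq : ∃ᶠ n : ℕ in atTop,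
      (1/4 : ℝ) * Real.exp (-(⌈(2:ℝ) * (n:ℝ)⌉₊ : ℝ)) ≤ excess (P true) H f n
  · exact ⟨P true, hPprob true, hfreq⟩
  · refine ⟨P false, hPprob false, ?_⟩
    rw [Filter.not_frequently] at hfreq
    refine (hfreq.mono ?_).frequently
    intro n hn
    have hc2 : (1/4:ℝ) * Real.exp (-(⌈(2:ℝ)*(n:ℝ)⌉₊:ℝ)) = (1/4:ℝ) * Real.exp (-(2*(n:ℝ))) := by
      rw [hcast n]
    rcases key n with h | h
    · exact absurd (show (1/4:ℝ) * Real.exp (-(⌈(2:ℝ)*(n:ℝ)⌉₊:ℝ)) ≤ excess (P true) H f n by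
        rw [hc2]; exact h) hn
    · show (1/4:ℝ) * Real.exp (-(⌈(2:ℝ)*(n:ℝ)⌉₊:ℝ)) ≤ excess (P false) H f n
      rw [hc2]; exact h
/-- Theorem 2.2: any finite concept class with at least two elements is
agnostically learnable with optimal rate `e^{-n}`. -/
theorem finite_class_optimal_exponential_rate
    {X : Type*} [TopologicalSpace X] [PolishSpace X] [MeasurableSpace X] [BorelSpace X]
    (H : Set (X → Bool)) (hmeas : ∀ h ∈ H, Measurable h)
    (hfin : H.Finite) (hnt : H.Nontrivial) :
    LearnableAtRate H (fun n => Real.exp (-(n : ℝ))) ∧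
      NotLearnableFasterThan H (fun n => Real.exp (-(n : ℝ))) := by
  haveI : MeasurableSingletonClass X := inferInstance
  exact ⟨upper_bound_aux H hmeas hfin hnt.nonempty, lower_bound_aux H hnt⟩

end Agn
end

section
/- Any concept class H of Borel-measurable functions X → {0,1} with |H| ≥ 2 is not agnostically learnable faster than e^{−n}: there exist constants C, c > 0 such that for every learning algorithm ĥ_n there exists a probability distribution P on X × {0,1} with E[er_P(ĥ_n)] − inf_{h∈H} er_P(h) ≥ C·e^{−c·n} for infinitely many n ∈ ℕ. -/
open MeasureTheory Filter
open scoped ENNReal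

namespace Agn

section AuxProofs

lemma aux_smul_prod_le {α β : Type*} [MeasurableSpace α] [MeasurableSpace β]
    {μ1 μ2 : Measure α} {ν1 ν2 : Measure β} [SFinite ν1] [SFinite ν2]
    {c d : ℝ≥0∞} (hd : d ≠ ∞)
    (h1 : c • μ1 ≤ μ2) (h2 : d • ν1 ≤ ν2) :
    (c * d) • μ1.prod ν1 ≤ μ2.prod ν2 := by
  refine Measure.le_iff.2 fun s hs => ?_
  rw [Measure.smul_apply, smul_eq_mul, Measure.prod_apply hs, Measure.prod_apply hs]
  calc c * d * ∫⁻ x, ν1 (Prod.mk x ⁻¹' s) ∂μ1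
      = c * ∫⁻ x, d * ν1 (Prod.mk x ⁻¹' s) ∂μ1 := by
        rw [lintegral_const_mul' d _ hd, mul_assoc]
    _ = ∫⁻ x, d * ν1 (Prod.mk x ⁻¹' s) ∂(c • μ1) := (lintegral_smul_measure c _).symm
    _ ≤ ∫⁻ x, ν2 (Prod.mk x ⁻¹' s) ∂μ2 := by
        refine lintegral_mono' h1 fun x => ?_
        have := Measure.le_iff'.1 h2 (Prod.mk x ⁻¹' s)
        simpa [Measure.smul_apply, smul_eq_mul] using this

lemma aux_pi_smul_le {Y : Type*} [MeasurableSpace Y]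
    (μ ν : Measure Y) [IsProbabilityMeasure μ] [IsProbabilityMeasure ν]
    {c : ℝ≥0∞} (hc : c ≠ ∞) (h : c • μ ≤ ν) (n : ℕ) :
    c ^ n • (Measure.pi fun _ : Fin n => μ) ≤ Measure.pi fun _ : Fin n => ν := by
  induction n with
  | zero =>
      rw [Measure.pi_of_empty, Measure.pi_of_empty, pow_zero, one_smul]
  | succ n ih =>
      have hμ := (MeasureTheory.measurePreserving_piFinSuccAbove
        (fun _ : Fin (n+1) => μ) 0).symm
      have hν := (MeasureTheory.measurePreserving_piFinSuccAbove
        (fun _ : Fin (n+1) => ν) 0).symm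
      rw [← hμ.map_eq, ← hν.map_eq, ← Measure.map_smul]
      refine Measure.map_mono ?_ (MeasurableEquiv.measurable _)
      have key := aux_smul_prod_le (ENNReal.pow_ne_top hc) h ih
      simpa [pow_succ, mul_comm] using key

/-- Two-point noisy distribution concentrated at `x0` with label bias towards `b`. -/
noncomputable def Pb {X : Type*} [MeasurableSpace X] (x0 : X) (b : Bool) : Measure (X × Bool) :=
  ENNReal.ofReal (if b then 3/4 else 1/4) • Measure.dirac (x0, true) +
  ENNReal.ofReal (if b then 1/4 else 3/4) • Measure.dirac (x0, false)

variable {X : Type*} [MeasurableSpace X] [MeasurableSingletonClass X]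

instance Pb_prob (x0 : X) (b : Bool) : IsProbabilityMeasure (Pb x0 b) := by
  constructor
  cases b <;>
    simp [Pb, Measure.add_apply, Measure.smul_apply, smul_eq_mul] <;>
    rw [show (4⁻¹ : ℝ≥0∞) = ENNReal.ofReal (1/4) by simp,
      ← ENNReal.ofReal_add (by norm_num) (by norm_num)] <;> norm_num

lemma Pb_er (x0 : X) (b : Bool) (h : X → Bool) :
    ((Pb x0 b) {p | h p.1 ≠ p.2}).toReal = if h x0 = b then (1/4:ℝ) else 3/4 := by
  have hd : ∀ (y : Bool) (s : Set (X × Bool)), Measure.dirac (x0, y) s = s.indicator 1 (x0, y) :=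
    fun y s => Measure.dirac_apply _ s
  rcases hb : h x0 with _ | _ <;> rcases b with _ | _ <;>
    simp [Pb, Measure.add_apply, Measure.smul_apply, smul_eq_mul, hd,
      Set.indicator_apply, hb, ENNReal.toReal_ofReal] <;> norm_num

lemma Pb_le (x0 : X) : ENNReal.ofReal (1/3) • Pb x0 false ≤ Pb x0 true := by
  refine Measure.le_iff'.2 fun s => ?_
  simp only [Pb, Measure.smul_apply, Measure.add_apply, smul_eq_mul, if_true, if_false,
    Bool.false_eq_true]
  rw [mul_add, ← mul_assoc, ← mul_assoc, ← ENNReal.ofReal_mul (by norm_num),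
    ← ENNReal.ofReal_mul (by norm_num)]
  exact add_le_add (mul_le_mul_left (ENNReal.ofReal_le_ofReal (by norm_num)) _)
    (mul_le_mul_left (ENNReal.ofReal_le_ofReal (by norm_num)) _)

end AuxProofs

/-- Theorem 4.2: any concept class with at least two elements is not
agnostically learnable faster than `e^{-n}`. -/
theorem not_learnable_faster_than_exponential
    {X : Type*} [TopologicalSpace X] [PolishSpace X] [MeasurableSpace X] [BorelSpace X]
    (H : Set (X → Bool)) (hmeas : ∀ h ∈ H, Measurable h) (hnt : H.Nontrivial) :
    ∃ C > (0 : ℝ), ∃ c > (0 : ℝ), ∀ f : Alg X, IsLearningAlg f →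
      ∃ P : Measure (X × Bool), IsProbabilityMeasure P ∧
        ∃ᶠ n : ℕ in atTop, C * Real.exp (-(c * (n : ℝ))) ≤ excess P H f n := by
  classical
  refine ⟨1/4, by norm_num, Real.log 3, Real.log_pos (by norm_num), fun f hf => ?_⟩
  obtain ⟨g0, hg0, g1, hg1, hgne⟩ := hnt
  obtain ⟨x0, hx0⟩ := Function.ne_iff.1 hgne
  -- a hypothesis matching any desired label at x0
  have hmatch : ∀ b : Bool, ∃ h ∈ H, h x0 = b := by
    intro b
    by_cases hb : g0 x0 = b
    · exact ⟨g0, hg0, hb⟩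
    · refine ⟨g1, hg1, ?_⟩
      revert hx0 hb; cases g0 x0 <;> cases g1 x0 <;> cases b <;> simp
  have her : ∀ (b : Bool) (h : X → Bool),
      er (Pb x0 b) h = if h x0 = b then (1/4:ℝ) else 3/4 := fun b h => Pb_er x0 b h
  -- optimal error is 1/4
  have hopt : ∀ b : Bool, optErr (Pb x0 b) H = 1/4 := by
    intro b
    obtain ⟨hb, hbH, hbb⟩ := hmatch b
    have hlb : ∀ y ∈ (fun h => er (Pb x0 b) h) '' H, (1/4:ℝ) ≤ y := by
      rintro y ⟨h, hH, rfl⟩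
      show (1/4:ℝ) ≤ er (Pb x0 b) h
      rw [her]; split <;> norm_num
    have hmem : (1/4:ℝ) ∈ (fun h => er (Pb x0 b) h) '' H :=
      ⟨hb, hbH, by show er (Pb x0 b) hb = 1/4; rw [her, if_pos hbb]⟩
    exact le_antisymm (csInf_le ⟨1/4, hlb⟩ hmem) (le_csInf ⟨_, hmem⟩ hlb)
  -- the excess error formula
  have hexc : ∀ (b : Bool) (n : ℕ), excess (Pb x0 b) H f n
      = (1/2) * ((sampleMeasure (Pb x0 b) n) {S | f n S x0 ≠ b}).toReal := by
    intro b n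
    have hQprob : IsProbabilityMeasure (sampleMeasure (Pb x0 b) n) := by
      unfold sampleMeasure; infer_instance
    set Q := sampleMeasure (Pb x0 b) n with hQdef
    set μ := Q.prod (Measure.dirac x0) with hμdef
    haveI : IsProbabilityMeasure μ := by rw [hμdef]; infer_instance
    have hnm : NullMeasurable (fun p : (Fin n → X × Bool) × X => f n p.1 p.2) μ :=
      hf n μ inferInstance
    set W := {p : (Fin n → X × Bool) × X | f n p.1 p.2 ≠ b} with hWdef
    have hW : NullMeasurableSet W μ := hnm (measurableSet_singleton b).compl
    have htW : MeasureTheory.toMeasurable μ W =ᵐ[μ] W := hW.toMeasurable_ae_eq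
    set t := MeasureTheory.toMeasurable μ W with htdef
    have hι : Measurable (fun S : Fin n → X × Bool => (S, x0)) :=
      measurable_id.prodMk measurable_const
    have hmapQ : Q.map (fun S => (S, x0)) = μ := (Measure.prod_dirac x0).symm
    set A := {S : Fin n → X × Bool | f n S x0 ≠ b} with hAdef
    set s' := (fun S : Fin n → X × Bool => (S, x0)) ⁻¹' t with hs'def
    have hs' : MeasurableSet s' := hι (measurableSet_toMeasurable μ W)
    have hWt := MeasureTheory.ae_eq_set.1 htW
    have hnull : ∀ u : Set ((Fin n → X × Bool) × X), μ u = 0 →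
        Q ((fun S : Fin n → X × Bool => (S, x0)) ⁻¹' u) = 0 := by
      intro u hu
      refine le_antisymm ?_ zero_le
      calc Q ((fun S : Fin n → X × Bool => (S, x0)) ⁻¹' u)
          ≤ (Q.map (fun S => (S, x0))) u := Measure.le_map_apply hι.aemeasurable u
        _ = 0 := by rw [hmapQ, hu]
    have hAs' : A =ᵐ[Q] s' := by
      rw [MeasureTheory.ae_eq_set]
      constructor
      · have : A \ s' = (fun S : Fin n → X × Bool => (S, x0)) ⁻¹' (W \ t) := rfl
        rw [this]; exact hnull _ hWt.2
      · have : s' \ A = (fun S : Fin n → X × Bool => (S, x0)) ⁻¹' (t \ W) := rfl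
        rw [this]; exact hnull _ hWt.1
    have hint : (fun S => er (Pb x0 b) (f n S))
        =ᵐ[Q] fun S => 1/4 + s'.indicator (fun _ => (1/2:ℝ)) S := by
      filter_upwards [hAs'] with S hS
      have hSiff : (S ∈ A) ↔ (S ∈ s') := iff_of_eq hS
      rw [her]
      by_cases hfb : f n S x0 = b
      · have : S ∉ s' := fun hc => (hSiff.2 hc) hfb
        simp [hfb, Set.indicator_apply, this]
      · have : S ∈ s' := hSiff.1 hfb
        simp [hfb, Set.indicator_apply, this]; norm_num
    have hQs' : Q s' = Q A := (measure_congr hAs').symm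
    have hexp : expErr (Pb x0 b) f n = 1/4 + (Q A).toReal * (1/2) := by
      unfold expErr
      rw [← hQdef, integral_congr_ae hint, integral_add (integrable_const _)
        ((integrable_const (1/2:ℝ)).indicator hs'), integral_const,
        integral_indicator hs', setIntegral_const, measureReal_def, measureReal_def, hQs']
      simp [smul_eq_mul]
    unfold excess
    rw [hexp, hopt b]
    ring
  -- the key information-theoretic lower bound
  have hsum : ∀ n : ℕ, 2 * ((1/4:ℝ) * (1/3)^n) ≤
      excess (Pb x0 false) H f n + excess (Pb x0 true) H f n := by
    intro n
    haveI hQf : IsProbabilityMeasure (sampleMeasure (Pb x0 false) n) := by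
      unfold sampleMeasure; infer_instance
    haveI hQt : IsProbabilityMeasure (sampleMeasure (Pb x0 true) n) := by
      unfold sampleMeasure; infer_instance
    set Qf := sampleMeasure (Pb x0 false) n with hQfdef
    set Qt := sampleMeasure (Pb x0 true) n with hQtdef
    set c : ℝ≥0∞ := ENNReal.ofReal (1/3) with hcdef
    have hcne : c ≠ ∞ := ENNReal.ofReal_ne_top
    have hc1 : c ≤ 1 := by
      rw [hcdef, ← ENNReal.ofReal_one]
      exact ENNReal.ofReal_le_ofReal (by norm_num)
    have hle : c ^ n • Qf ≤ Qt :=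
      aux_pi_smul_le (Pb x0 false) (Pb x0 true) hcne (Pb_le x0) n
    set Af := {S : Fin n → X × Bool | f n S x0 ≠ false} with hAfdef
    set At := {S : Fin n → X × Bool | f n S x0 ≠ true} with hAtdef
    have huniv : Af ∪ At = Set.univ := by
      ext S
      simp only [Set.mem_union, Set.mem_univ, iff_true, hAfdef, hAtdef, Set.mem_setOf_eq]
      cases hv : f n S x0 <;> simp
    have hkey : c ^ n ≤ Qf Af + Qt At := by
      calc c ^ n = c ^ n * Qf Set.univ := by rw [measure_univ, mul_one]
        _ = c ^ n * Qf (Af ∪ At) := by rw [huniv]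
        _ ≤ c ^ n * (Qf Af + Qf At) := mul_le_mul_right (measure_union_le Af At) _
        _ = c ^ n * Qf Af + c ^ n * Qf At := mul_add _ _ _
        _ ≤ Qf Af + Qt At := by
            refine add_le_add ?_ ?_
            · calc c ^ n * Qf Af ≤ 1 * Qf Af :=
                    mul_le_mul_left (pow_le_one' hc1 n) _
                _ = Qf Af := one_mul _
            · have := Measure.le_iff'.1 hle At
              simpa [Measure.smul_apply, smul_eq_mul] using this
    have hfin : Qf Af + Qt At ≠ ∞ :=
      ENNReal.add_ne_top.2 ⟨measure_ne_top _ _, measure_ne_top _ _⟩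
    have hreal : (1/3:ℝ)^n ≤ (Qf Af).toReal + (Qt At).toReal := by
      have h1 := ENNReal.toReal_mono hfin hkey
      rw [ENNReal.toReal_add (measure_ne_top _ _) (measure_ne_top _ _)] at h1
      calc (1/3:ℝ)^n = (c ^ n).toReal := by
            rw [hcdef, ENNReal.toReal_pow, ENNReal.toReal_ofReal (by norm_num)]
        _ ≤ _ := h1
    rw [hexc false n, hexc true n, ← hQfdef, ← hQtdef, ← hAfdef, ← hAtdef]
    nlinarith [hreal]
  -- convert the exponential
  have hexpval : ∀ n : ℕ, Real.exp (-(Real.log 3 * (n:ℝ))) = (1/3:ℝ)^n := by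
    intro n
    rw [mul_comm, Real.exp_neg, Real.exp_nat_mul, Real.exp_log (by norm_num : (0:ℝ) < 3)]
    rw [one_div, inv_pow]
  have hforall : ∀ n : ℕ,
      (1/4:ℝ) * Real.exp (-(Real.log 3 * (n:ℝ))) ≤ excess (Pb x0 false) H f n ∨
      (1/4:ℝ) * Real.exp (-(Real.log 3 * (n:ℝ))) ≤ excess (Pb x0 true) H f n := by
    intro n
    by_contra hcon
    push_neg at hcon
    obtain ⟨h1, h2⟩ := hcon
    rw [hexpval n] at h1 h2
    linarith [hsum n]
  have hfreq0 : ∃ᶠ n : ℕ in atTop,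
      ((1/4:ℝ) * Real.exp (-(Real.log 3 * (n:ℝ))) ≤ excess (Pb x0 false) H f n ∨
       (1/4:ℝ) * Real.exp (-(Real.log 3 * (n:ℝ))) ≤ excess (Pb x0 true) H f n) :=
    Filter.Frequently.of_forall hforall
  have hfreq := Filter.frequently_or_distrib.1 hfreq0
  rcases hfreq with h | h
  · exact ⟨Pb x0 false, inferInstance, h⟩
  · exact ⟨Pb x0 true, inferInstance, h⟩


end Agn
end

section
/- Let γ ∈ (0, 1/5), δ ∈ (0, 1/(8e)], and n ∈ ℕ ∪ {0} satisfy n < (1/(8γ²))·ln(1/(8δ)). Let p_0 = 1/2 − γ and p_1 = 1/2 + γ. Let t* ~ Bernoulli(1/2) and, conditioned on t*, let B_1,…,B_n be conditionally i.i.d. Bernoulli(p_{t*}). Then for any estimator t̂_n : {0,1}^n → {0,1}, possibly randomized using a source of randomness independent of t*, the probability that t̂_n(B_1,…,B_n) ≠ t* is strictly greater than δ. -/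
open MeasureTheory Filter
open scoped ENNReal

namespace Agn

section CoinAux

lemma bern_singleton (p : ℝ) (x : Bool) :
    bern p {x} = ENNReal.ofReal (if x then p else 1 - p) := by
  cases x <;>
    simp [bern, Measure.dirac_apply]

lemma bern_prob {p : ℝ} (h0 : 0 ≤ p) (h1 : p ≤ 1) : IsProbabilityMeasure (bern p) := by
  constructor
  simp only [bern, Measure.coe_add, Measure.coe_smul, Pi.add_apply, Pi.smul_apply,
    Measure.dirac_apply, Set.indicator_univ, Pi.one_apply, smul_eq_mul, mul_one]
  rw [← ENNReal.ofReal_add h0 (by linarith)]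
  norm_num

lemma pi_bern_singleton {p : ℝ} (h0 : 0 ≤ p) (h1 : p ≤ 1) (n : ℕ) (b : Fin n → Bool) :
    (Measure.pi fun _ : Fin n => bern p) {b} =
      ENNReal.ofReal (∏ i, if b i then p else 1 - p) := by
  haveI : IsProbabilityMeasure (bern p) := bern_prob h0 h1
  rw [← Set.univ_pi_singleton b, Measure.pi_pi]
  rw [ENNReal.ofReal_prod_of_nonneg (fun i _ => by split <;> linarith)]
  exact Finset.prod_congr rfl fun i _ => bern_singleton p (b i)

lemma sum_min_ge (γ : ℝ) (hγ0 : 0 < γ) (hγ : γ < 1 / 2) (n : ℕ) :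
    (1 - 4 * γ ^ 2) ^ n / 2 ≤ ∑ b : Fin n → Bool,
      min (∏ i, if b i then (1 / 2 - γ) else (1 / 2 + γ))
          (∏ i, if b i then (1 / 2 + γ) else (1 / 2 - γ)) := by
  set p : ℝ := 1 / 2 - γ with hp
  set q : ℝ := 1 / 2 + γ with hq
  have hp0 : 0 < p := by rw [hp]; linarith
  have hq0 : 0 < q := by rw [hq]; linarith
  set ra : (Fin n → Bool) → ℝ := fun b => ∏ i, if b i then p else q with hra
  set rb : (Fin n → Bool) → ℝ := fun b => ∏ i, if b i then q else p with hrb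
  have hra0 : ∀ b, 0 ≤ ra b := fun b =>
    Finset.prod_nonneg fun i _ => by split <;> linarith
  have hrb0 : ∀ b, 0 ≤ rb b := fun b =>
    Finset.prod_nonneg fun i _ => by split <;> linarith
  have hmin0 : ∀ b, 0 ≤ min (ra b) (rb b) := fun b => le_min (hra0 b) (hrb0 b)
  have hmax0 : ∀ b, 0 ≤ max (ra b) (rb b) := fun b => le_trans (hra0 b) (le_max_left _ _)
  -- product of the two weights is constant
  have hmul : ∀ b, ra b * rb b = (p * q) ^ n := by
    intro b
    rw [hra, hrb, ← Finset.prod_mul_distrib]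
    have h1 : ∀ i : Fin n, (if b i then p else q) * (if b i then q else p) = p * q := by
      intro i; cases b i <;> simp [mul_comm]
    rw [Finset.prod_congr rfl fun i _ => h1 i, Finset.prod_const]
    simp
  -- the geometric mean term
  have hsqrt : ∀ b : Fin n → Bool,
      Real.sqrt (min (ra b) (rb b)) * Real.sqrt (max (ra b) (rb b))
        = Real.sqrt ((p * q) ^ n) := by
    intro b
    rw [← Real.sqrt_mul (hmin0 b), min_mul_max, hmul b]
  -- Cauchy–Schwarz
  have hCS := Finset.sum_mul_sq_le_sq_mul_sq Finset.univ
    (fun b : Fin n → Bool => Real.sqrt (min (ra b) (rb b)))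
    (fun b : Fin n → Bool => Real.sqrt (max (ra b) (rb b)))
  have hsum_sqrt : ∑ b : Fin n → Bool,
      Real.sqrt (min (ra b) (rb b)) * Real.sqrt (max (ra b) (rb b))
        = 2 ^ n * Real.sqrt ((p * q) ^ n) := by
    rw [Finset.sum_congr rfl fun b _ => hsqrt b, Finset.sum_const]
    simp [Finset.card_univ, mul_comm]
  have hsq_min : ∀ b : Fin n → Bool, Real.sqrt (min (ra b) (rb b)) ^ 2
      = min (ra b) (rb b) := fun b => Real.sq_sqrt (hmin0 b)
  have hsq_max : ∀ b : Fin n → Bool, Real.sqrt (max (ra b) (rb b)) ^ 2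
      = max (ra b) (rb b) := fun b => Real.sq_sqrt (hmax0 b)
  rw [hsum_sqrt] at hCS
  simp only [hsq_min, hsq_max] at hCS
  have hlhs : (2 ^ n * Real.sqrt ((p * q) ^ n)) ^ 2 = (1 - 4 * γ ^ 2) ^ n := by
    rw [mul_pow, Real.sq_sqrt (by positivity)]
    rw [← pow_mul, show (2 : ℝ) ^ (n * 2) = 4 ^ n by rw [mul_comm, pow_mul]; norm_num]
    rw [← mul_pow]
    congr 1
    rw [hp, hq]; ring
  rw [hlhs] at hCS
  -- sum of the weights is 1
  have hsum_ra : ∑ b : Fin n → Bool, ra b = 1 := by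
    have h := Finset.prod_univ_sum (fun _ : Fin n => (Finset.univ : Finset Bool))
      (fun _ x => if x then p else q)
    simp only [Fintype.sum_bool, Fintype.piFinset_univ] at h
    norm_num at h
    rw [hra, ← h]
    rw [show p + q = 1 by rw [hp, hq]; ring]
    simp
  have hsum_rb : ∑ b : Fin n → Bool, rb b = 1 := by
    have h := Finset.prod_univ_sum (fun _ : Fin n => (Finset.univ : Finset Bool))
      (fun _ x => if x then q else p)
    simp only [Fintype.sum_bool, Fintype.piFinset_univ] at h
    norm_num at h
    rw [hrb, ← h]
    rw [show q + p = 1 by rw [hp, hq]; ring]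
    simp
  have hsum_max : ∑ b : Fin n → Bool, max (ra b) (rb b) ≤ 2 := by
    calc ∑ b : Fin n → Bool, max (ra b) (rb b)
        ≤ ∑ b : Fin n → Bool, (ra b + rb b) := by
          apply Finset.sum_le_sum
          intro b _
          exact max_le (le_add_of_nonneg_right (hrb0 b)) (le_add_of_nonneg_left (hra0 b))
      _ = 2 := by rw [Finset.sum_add_distrib, hsum_ra, hsum_rb]; norm_num
  have hmin_nonneg : 0 ≤ ∑ b : Fin n → Bool, min (ra b) (rb b) :=
    Finset.sum_nonneg fun b _ => hmin0 b
  nlinarith [hCS, hsum_max, hmin_nonneg]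

lemma four_delta_lt (γ δ : ℝ) (hγ0 : 0 < γ) (hγ : γ < 1 / 5) (hδ0 : 0 < δ)
    (hδ : δ ≤ 1 / (8 * Real.exp 1)) (n : ℕ)
    (hn : (n : ℝ) < (1 / (8 * γ ^ 2)) * Real.log (1 / (8 * δ))) :
    4 * δ < (1 - 4 * γ ^ 2) ^ n := by
  set L : ℝ := Real.log (1 / (8 * δ)) with hL
  have hexp : Real.exp 1 ≤ 1 / (8 * δ) := by
    rw [le_div_iff₀ (by positivity)]
    have h8e : 0 < 8 * Real.exp 1 := by positivity
    rw [le_div_iff₀ h8e] at hδ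
    nlinarith [Real.exp_pos 1]
  have hL1 : 1 ≤ L := by
    rw [hL, Real.le_log_iff_exp_le (by positivity)]
    exact hexp
  have hx0 : 0 < 1 - 4 * γ ^ 2 := by nlinarith
  have hx21 : (21 : ℝ) / 25 ≤ 1 - 4 * γ ^ 2 := by nlinarith
  -- -log(1-x) ≤ (25/21) x
  have hlog : -Real.log (1 - 4 * γ ^ 2) ≤ (25 / 21) * (4 * γ ^ 2) := by
    have h1 := Real.log_le_sub_one_of_pos (show 0 < (1 - 4 * γ ^ 2)⁻¹ by positivity)
    rw [Real.log_inv] at h1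
    have h2 : (1 - 4 * γ ^ 2)⁻¹ - 1 ≤ (25 / 21) * (4 * γ ^ 2) := by
      rw [inv_eq_one_div, div_sub' (ne_of_gt hx0), div_le_iff₀ hx0]
      nlinarith
    linarith
  have hn8 : (n : ℝ) * (8 * γ ^ 2) < L := by
    have h8 : (0 : ℝ) < 8 * γ ^ 2 := by positivity
    have := mul_lt_mul_of_pos_right hn h8
    rwa [one_div, inv_mul_eq_div, div_mul_cancel₀ _ (ne_of_gt h8)] at this
  have key : (n : ℝ) * (-Real.log (1 - 4 * γ ^ 2)) < L := by
    calc (n : ℝ) * (-Real.log (1 - 4 * γ ^ 2))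
        ≤ (n : ℝ) * ((25 / 21) * (4 * γ ^ 2)) :=
          mul_le_mul_of_nonneg_left hlog (Nat.cast_nonneg n)
      _ = (25 / 42) * ((n : ℝ) * (8 * γ ^ 2)) := by ring
      _ < (25 / 42) * L := by
          apply mul_lt_mul_of_pos_left hn8; norm_num
      _ ≤ L := by linarith
  have hlog8δ : Real.log (8 * δ) = -L := by
    rw [hL, one_div, Real.log_inv, neg_neg]
  have hlog4δ : Real.log (4 * δ) < (n : ℝ) * Real.log (1 - 4 * γ ^ 2) := by
    have h4 : Real.log (4 * δ) = Real.log (8 * δ) - Real.log 2 := by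
      rw [← Real.log_div (by positivity) (by norm_num),
        show (8 : ℝ) * δ / 2 = 4 * δ by ring]
    rw [h4, hlog8δ]
    have hlog2 : (0 : ℝ) < Real.log 2 := Real.log_pos (by norm_num)
    nlinarith
  have hfin : Real.log (4 * δ) < Real.log ((1 - 4 * γ ^ 2) ^ n) := by
    rw [Real.log_pow]; exact hlog4δ
  exact (Real.log_lt_log_iff (by positivity) (by positivity)).mp hfin


end CoinAux

/-- Lemma 4.3: lower bound for testing the bias of a coin.  The joint law of
`(t*, B₁, …, B_n)` is the indicated mixture, and any (possibly randomized) estimator errs with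
probability greater than `δ`. -/
theorem coin_testing_lower_bound
    (γ δ : ℝ) (hγ0 : 0 < γ) (hγ : γ < 1 / 5)
    (hδ0 : 0 < δ) (hδ : δ ≤ 1 / (8 * Real.exp 1))
    (n : ℕ) (hn : (n : ℝ) < (1 / (8 * γ ^ 2)) * Real.log (1 / (8 * δ)))
    {Ω : Type*} [MeasurableSpace Ω] (ν : Measure Ω) [IsProbabilityMeasure ν]
    (est : (Fin n → Bool) × Ω → Bool) (hest : Measurable est) :
    δ <
      ((((1 / 2 : ℝ≥0∞) •
            ((Measure.dirac false).prod (Measure.pi fun _ : Fin n => bern (1 / 2 - γ))) +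
          (1 / 2 : ℝ≥0∞) •
            ((Measure.dirac true).prod
              (Measure.pi fun _ : Fin n => bern (1 / 2 + γ)))).prod ν)
        {q : (Bool × (Fin n → Bool)) × Ω | est (q.1.2, q.2) ≠ q.1.1}).toReal := by
  have hp0 : (0 : ℝ) ≤ 1 / 2 - γ := by linarith
  have hp1 : 1 / 2 - γ ≤ 1 := by linarith
  have hq0 : (0 : ℝ) ≤ 1 / 2 + γ := by linarith
  have hq1 : 1 / 2 + γ ≤ 1 := by linarith
  haveI hB0 : IsProbabilityMeasure (bern (1 / 2 - γ)) := bern_prob hp0 hp1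
  haveI hB1 : IsProbabilityMeasure (bern (1 / 2 + γ)) := bern_prob hq0 hq1
  set P0 : Measure (Fin n → Bool) := Measure.pi fun _ : Fin n => bern (1 / 2 - γ) with hP0
  set P1 : Measure (Fin n → Bool) := Measure.pi fun _ : Fin n => bern (1 / 2 + γ) with hP1
  set M : Measure (Bool × (Fin n → Bool)) :=
    (1 / 2 : ℝ≥0∞) • ((Measure.dirac false).prod P0) +
      (1 / 2 : ℝ≥0∞) • ((Measure.dirac true).prod P1) with hM
  set E : Set ((Bool × (Fin n → Bool)) × Ω) := {q | est (q.1.2, q.2) ≠ q.1.1} with hEdef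
  have hEm : MeasurableSet E := by
    have h1 : E = (fun q : (Bool × (Fin n → Bool)) × Ω => (est (q.1.2, q.2), q.1.1)) ⁻¹'
        {x : Bool × Bool | x.1 ≠ x.2} := rfl
    rw [h1]
    exact ((hest.comp (measurable_fst.snd.prodMk measurable_snd)).prodMk
      measurable_fst.fst) ((Set.to_countable _).measurableSet)
  haveI hMprob : IsProbabilityMeasure M := by
    constructor
    rw [hM]
    simp only [Measure.coe_add, Measure.coe_smul, Pi.add_apply, Pi.smul_apply,
      measure_univ, smul_eq_mul, mul_one]
    rw [one_div, ENNReal.inv_two_add_inv_two]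
  -- weights
  set ra : (Fin n → Bool) → ℝ := fun b => ∏ i, if b i then (1 / 2 - γ) else (1 / 2 + γ)
    with hra
  set rb : (Fin n → Bool) → ℝ := fun b => ∏ i, if b i then (1 / 2 + γ) else (1 / 2 - γ)
    with hrb
  have hP0b : ∀ b, P0 {b} = ENNReal.ofReal (ra b) := by
    intro b
    rw [hP0, pi_bern_singleton hp0 hp1, hra]
    congr 1
    refine Finset.prod_congr rfl fun i _ => ?_
    cases b i <;> simp <;> ring
  have hP1b : ∀ b, P1 {b} = ENNReal.ofReal (rb b) := by
    intro b
    rw [hP1, pi_bern_singleton hq0 hq1, hrb]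
    congr 1
    refine Finset.prod_congr rfl fun i _ => ?_
    cases b i <;> simp <;> ring
  -- slicing the product measure
  have hg : Measurable fun x : Bool × (Fin n → Bool) => ν (Prod.mk x ⁻¹' E) :=
    measurable_measure_prodMk_left hEm
  have key : (M.prod ν) E
      = ∑ b : Fin n → Bool,
          ((1 / 2 : ℝ≥0∞) * (ν {ω | est (b, ω) ≠ false} * P0 {b}) +
           (1 / 2 : ℝ≥0∞) * (ν {ω | est (b, ω) ≠ true} * P1 {b})) := by
    rw [Measure.prod_apply hEm, hM, lintegral_add_measure, lintegral_smul_measure,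
      lintegral_smul_measure, Measure.dirac_prod, Measure.dirac_prod,
      lintegral_map hg measurable_prodMk_left, lintegral_map hg measurable_prodMk_left,
      lintegral_fintype, lintegral_fintype, Finset.smul_sum, Finset.smul_sum,
      ← Finset.sum_add_distrib]
    rfl
  -- pointwise lower bound
  have hbound : ∀ b : Fin n → Bool,
      (1 / 2 : ℝ≥0∞) * ENNReal.ofReal (min (ra b) (rb b)) ≤
        (1 / 2 : ℝ≥0∞) * (ν {ω | est (b, ω) ≠ false} * P0 {b}) +
        (1 / 2 : ℝ≥0∞) * (ν {ω | est (b, ω) ≠ true} * P1 {b}) := by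
    intro b
    have hs : MeasurableSet {ω | est (b, ω) ≠ false} :=
      (hest.comp measurable_prodMk_left) ((Set.to_countable {x : Bool | x ≠ false}).measurableSet)
    have hcompl : {ω | est (b, ω) ≠ true} = {ω | est (b, ω) ≠ false}ᶜ := by
      ext ω
      simp only [Set.mem_setOf_eq, Set.mem_compl_iff, not_not]
      cases h : est (b, ω) <;> simp
    have hsum1 : ν {ω | est (b, ω) ≠ false} + ν {ω | est (b, ω) ≠ true} = 1 := by
      rw [hcompl, measure_add_measure_compl hs, measure_univ]
    calc (1 / 2 : ℝ≥0∞) * ENNReal.ofReal (min (ra b) (rb b))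
        = (1 / 2 : ℝ≥0∞) * (ν {ω | est (b, ω) ≠ false} * ENNReal.ofReal (min (ra b) (rb b)) +
            ν {ω | est (b, ω) ≠ true} * ENNReal.ofReal (min (ra b) (rb b))) := by
          rw [← add_mul, hsum1, one_mul]
      _ ≤ (1 / 2 : ℝ≥0∞) * (ν {ω | est (b, ω) ≠ false} * P0 {b} +
            ν {ω | est (b, ω) ≠ true} * P1 {b}) := by
          gcongr
          · rw [hP0b b]; exact ENNReal.ofReal_le_ofReal (min_le_left _ _)
          · rw [hP1b b]; exact ENNReal.ofReal_le_ofReal (min_le_right _ _)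
      _ = (1 / 2 : ℝ≥0∞) * (ν {ω | est (b, ω) ≠ false} * P0 {b}) +
          (1 / 2 : ℝ≥0∞) * (ν {ω | est (b, ω) ≠ true} * P1 {b}) := by
          rw [mul_add]
  have hlow : (1 / 2 : ℝ≥0∞) * ENNReal.ofReal (∑ b : Fin n → Bool, min (ra b) (rb b))
      ≤ (M.prod ν) E := by
    rw [key, ENNReal.ofReal_sum_of_nonneg fun b _ =>
        le_min (Finset.prod_nonneg fun i _ => by split <;> linarith)
          (Finset.prod_nonneg fun i _ => by split <;> linarith),
      Finset.mul_sum]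
    exact Finset.sum_le_sum fun b _ => hbound b
  -- the real-valued estimate
  have hreal : 2 * δ < ∑ b : Fin n → Bool, min (ra b) (rb b) := by
    have h1 := sum_min_ge γ hγ0 (by linarith) n
    have h2 := four_delta_lt γ δ hγ0 hγ hδ0 hδ n hn
    calc 2 * δ < (1 - 4 * γ ^ 2) ^ n / 2 := by linarith
      _ ≤ _ := h1
  -- strict inequality in ℝ≥0∞
  have hmain : ENNReal.ofReal δ < (M.prod ν) E := by
    refine lt_of_lt_of_le ?_ hlow
    have hδ' : ENNReal.ofReal δ
        = (1 / 2 : ℝ≥0∞) * ENNReal.ofReal (2 * δ) := by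
      rw [ENNReal.ofReal_mul (by norm_num : (0:ℝ) ≤ 2)]
      rw [← mul_assoc, show ENNReal.ofReal 2 = 2 by norm_num, one_div,
        ENNReal.inv_mul_cancel two_ne_zero ENNReal.ofNat_ne_top, one_mul]
    rw [hδ']
    refine ENNReal.mul_lt_mul_iff_right (by norm_num) (by norm_num) |>.mpr ?_
    exact ENNReal.ofReal_lt_ofReal_iff (lt_trans (by linarith) hreal) |>.mpr hreal
  have hne : (M.prod ν) E ≠ ⊤ := measure_ne_top _ _
  exact (ENNReal.ofReal_lt_iff_lt_toReal hδ0.le hne).mp hmain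

end Agn
end

section
/- For any concept class H of Borel-measurable functions X → {0,1} and any probability measure P on X × {0,1}, if H is totally bounded in L1(P_X), where P_X is the marginal of P on X, then there exists a Borel-measurable function h* : X → {0,1} (not necessarily in H) such that inf_{h'∈H} P_X({x : h'(x) ≠ h*(x)}) = 0 and er_P(h*) = inf_{h'∈H} er_P(h'). -/
open MeasureTheory Filter
open scoped ENNReal

namespace Agn

section LimitAux

variable {X : Type*} [MeasurableSpace X]

lemma agn_pigeon {α : Type*} {H' : Set α} (hfin : H'.Finite) {S : Set ℕ} (hS : S.Infinite)
    {p : α → ℕ → Prop} (h : ∀ m ∈ S, ∃ f ∈ H', p f m) :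
    ∃ f ∈ H', {m ∈ S | p f m}.Infinite := by
  by_contra hc
  push_neg at hc
  have hsub : S ⊆ ⋃ f ∈ H', {m ∈ S | p f m} := by
    intro m hm
    obtain ⟨f, hf, hp⟩ := h m hm
    exact Set.mem_biUnion hf ⟨hm, hp⟩
  exact hS ((hfin.biUnion (fun f hf => hc f hf)).subset hsub)

lemma agn_ne_meas {f g : X → Bool} (hf : Measurable f) (hg : Measurable g) :
    MeasurableSet {x | f x ≠ g x} :=
  (measurableSet_eq_fun hf hg).compl

lemma agn_symm {Y : Type*} (a b : Y → Bool) : {x | a x ≠ b x} = {x | b x ≠ a x} :=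
  Set.ext fun _ => ne_comm

lemma agn_tri (Q : Measure X) [IsFiniteMeasure Q] (a b c : X → Bool) :
    (Q {x | a x ≠ c x}).toReal ≤ (Q {x | a x ≠ b x}).toReal + (Q {x | b x ≠ c x}).toReal := by
  rw [← ENNReal.toReal_add (measure_ne_top Q _) (measure_ne_top Q _)]
  refine ENNReal.toReal_mono (ENNReal.add_ne_top.2 ⟨measure_ne_top Q _, measure_ne_top Q _⟩) ?_
  refine le_trans (measure_mono ?_) (measure_union_le _ _)
  intro x hx
  by_cases h : a x = b x
  · right
    simp only [Set.mem_setOf_eq] at hx ⊢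
    rw [← h]; exact hx
  · left; exact h

lemma agn_er_tri (P : Measure (X × Bool)) [IsFiniteMeasure P] (f g : X → Bool) :
    er P f ≤ er P g + (P {p : X × Bool | f p.1 ≠ g p.1}).toReal := by
  unfold er
  rw [← ENNReal.toReal_add (measure_ne_top P _) (measure_ne_top P _)]
  refine ENNReal.toReal_mono (ENNReal.add_ne_top.2 ⟨measure_ne_top P _, measure_ne_top P _⟩) ?_
  refine le_trans (measure_mono ?_) (measure_union_le _ _)
  intro p hp
  by_cases h : g p.1 = p.2
  · right
    simp only [Set.mem_setOf_eq] at hp ⊢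
    rw [h]; exact hp
  · left; exact h

lemma agn_map (P : Measure (X × Bool)) {f g : X → Bool} (hf : Measurable f)
    (hg : Measurable g) :
    (marginalX P) {x | f x ≠ g x} = P {p : X × Bool | f p.1 ≠ g p.1} := by
  rw [marginalX, Measure.map_apply measurable_fst (agn_ne_meas hf hg)]
  rfl

lemma agn_rec_chain (C : ℕ → Set ℕ → Prop)
    (key : ∀ (k : ℕ) (S : Set ℕ), S.Infinite → ∃ T, T ⊆ S ∧ T.Infinite ∧ C k T) :
    ∃ Sr : ℕ → Set ℕ, (∀ k, (Sr k).Infinite) ∧ (∀ k, Sr (k + 1) ⊆ Sr k) ∧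
      ∀ k, C k (Sr (k + 1)) := by
  choose T hsub hinf hC using key
  let F : ℕ → {S : Set ℕ // S.Infinite} := fun k =>
    Nat.rec ⟨Set.univ, Set.infinite_univ⟩ (fun k ih => ⟨T k ih.1 ih.2, hinf k ih.1 ih.2⟩) k
  exact ⟨fun k => (F k).1, fun k => (F k).2, fun k => hsub k (F k).1 (F k).2,
    fun k => hC k (F k).1 (F k).2⟩

end LimitAux

/-- Lemma 5.10: if `H` is totally bounded in `L₁(P_X)` then the infimum
error over `H` is attained by some measurable function in the `L₁(P_X)`-closure of `H`. -/
theorem limit_function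
    {X : Type*} [TopologicalSpace X] [PolishSpace X] [MeasurableSpace X] [BorelSpace X]
    (H : Set (X → Bool)) (hne : H.Nonempty) (hmeas : ∀ h ∈ H, Measurable h)
    (P : Measure (X × Bool)) [IsProbabilityMeasure P]
    (htb : TotallyBoundedL1 H (marginalX P)) :
    ∃ hstar : X → Bool, Measurable hstar ∧
      sInf ((fun h => ((marginalX P) {x | h x ≠ hstar x}).toReal) '' H) = 0 ∧
      er P hstar = optErr P H := by
  classical
  set Q := marginalX P with hQdef
  have hQmap : Q = P.map Prod.fst := hQdef
  have hQprob : IsProbabilityMeasure Q := by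
    rw [hQmap]; exact Measure.isProbabilityMeasure_map measurable_fst.aemeasurable
  -- a minimizing sequence
  have hgex : ∀ m : ℕ, ∃ h ∈ H, er P h < optErr P H + 1 / ((m : ℝ) + 1) := by
    intro m
    have hne' : ((fun h => er P h) '' H).Nonempty := hne.image _
    obtain ⟨a, ⟨h, hh, rfl⟩, ha⟩ := Real.lt_sInf_add_pos hne'
      (show (0:ℝ) < 1 / ((m : ℝ) + 1) by positivity)
    exact ⟨h, hh, ha⟩
  choose g hgH hgE using hgex
  have hbdd : BddBelow ((fun h => er P h) '' H) := by
    refine ⟨0, ?_⟩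
    rintro a ⟨h, -, rfl⟩
    exact ENNReal.toReal_nonneg
  -- key extraction step from total boundedness
  have key : ∀ (k : ℕ) (S : Set ℕ), S.Infinite → ∃ T, T ⊆ S ∧ T.Infinite ∧
      ∀ m ∈ T, ∀ m' ∈ T, (Q {x | g m x ≠ g m' x}).toReal ≤ 2 * (1/2) ^ k := by
    intro k S hS
    obtain ⟨H', hH'sub, hH'fin, hcover⟩ := htb ((1/2) ^ k) (by positivity)
    obtain ⟨f, hf, hinf⟩ := agn_pigeon hH'fin hS
      (p := fun f m => (Q {x | f x ≠ g m x}).toReal ≤ (1/2) ^ k)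
      (fun m _ => hcover (g m) (hgH m))
    refine ⟨_, fun m hm => hm.1, hinf, ?_⟩
    intro m hm m' hm'
    calc (Q {x | g m x ≠ g m' x}).toReal
        ≤ (Q {x | g m x ≠ f x}).toReal + (Q {x | f x ≠ g m' x}).toReal := agn_tri Q _ _ _
      _ ≤ (1/2) ^ k + (1/2) ^ k := by
          refine add_le_add ?_ hm'.2
          rw [agn_symm]; exact hm.2
      _ = 2 * (1/2) ^ k := by ring
  obtain ⟨Sr, hSinf, hSsub, hSdiam⟩ := agn_rec_chain
    (fun k T => ∀ m ∈ T, ∀ m' ∈ T, (Q {x | g m x ≠ g m' x}).toReal ≤ 2 * (1/2) ^ k) key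
  have hmex : ∀ k : ℕ, ∃ n ∈ Sr (k + 1), k < n := fun k => (hSinf (k + 1)).exists_gt k
  choose mι hmS hmlt using hmex
  set u : ℕ → X → Bool := fun k => g (mι k) with hudef
  have hu : ∀ k, Measurable (u k) := fun k => hmeas _ (hgH _)
  have huH : ∀ k, u k ∈ H := fun k => hgH _
  have hd : ∀ k, (Q {x | u k x ≠ u (k + 1) x}).toReal ≤ 2 * (1/2) ^ k :=
    fun k => hSdiam k _ (hmS k) _ (hSsub (k + 1) (hmS (k + 1)))
  -- the limit function
  set hstar : X → Bool := fun x => if ∃ N, ∀ k, u (N + k) x = true then true else false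
    with hstardef
  have hstar_true : ∀ x, hstar x = true ↔ ∃ N, ∀ k, u (N + k) x = true := by
    intro x
    by_cases h : ∃ N, ∀ k, u (N + k) x = true <;> simp [hstardef, h]
  have hstar_meas : Measurable hstar := by
    have hset : MeasurableSet {x | ∃ N, ∀ k, u (N + k) x = true} := by
      have : {x | ∃ N, ∀ k, u (N + k) x = true} = ⋃ N, ⋂ k, (u (N + k)) ⁻¹' {true} := by
        ext x; simp
      rw [this]
      exact MeasurableSet.iUnion fun N => MeasurableSet.iInter fun k =>
        hu _ (measurableSet_singleton true)
    apply measurable_to_countable'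
    intro y
    cases y
    · have : hstar ⁻¹' {false} = {x | ∃ N, ∀ k, u (N + k) x = true}ᶜ := by
        ext x
        simp only [Set.mem_preimage, Set.mem_singleton_iff, Set.mem_compl_iff,
          Set.mem_setOf_eq, ← hstar_true x]
        cases hstar x <;> simp
      rw [this]; exact hset.compl
    · have : hstar ⁻¹' {true} = {x | ∃ N, ∀ k, u (N + k) x = true} := by
        ext x
        simp only [Set.mem_preimage, Set.mem_singleton_iff, Set.mem_setOf_eq, hstar_true x]
      rw [this]; exact hset
  -- Borel–Cantelli-type bound
  have hBC : ∀ N : ℕ, {x | u N x ≠ hstar x} ⊆ ⋃ k, {x | u (N + k) x ≠ u (N + k + 1) x} := by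
    intro N x hx
    by_contra hxB
    simp only [Set.mem_iUnion, Set.mem_setOf_eq, not_exists, not_not] at hxB
    have hconst : ∀ k, u (N + k) x = u N x := by
      intro k
      induction k with
      | zero => rfl
      | succ k ih =>
          show u (N + k + 1) x = u N x
          rw [← hxB k]; exact ih
    apply hx
    cases hUN : u N x
    · have : ¬ ∃ N', ∀ k, u (N' + k) x = true := by
        rintro ⟨N', hN'⟩
        have h1 := hN' N
        rw [Nat.add_comm N' N, hconst N', hUN] at h1
        exact Bool.false_ne_true h1
      simp only [Set.mem_setOf_eq, hUN, hstardef, this, if_false]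
    · have : ∃ N', ∀ k, u (N' + k) x = true := ⟨N, fun k => by rw [hconst k]; exact hUN⟩
      simp only [Set.mem_setOf_eq, hUN, hstardef, this, if_true]
  have hD : ∀ N : ℕ, (Q {x | u N x ≠ hstar x}).toReal ≤ 4 * (1/2) ^ N := by
    intro N
    have hsummand : ∀ k : ℕ, (2 : ℝ) * (1/2) ^ (N + k) = (2 * (1/2) ^ N) * (1/2) ^ k := by
      intro k; rw [pow_add]; ring
    have hsummable : Summable fun k : ℕ => (2 : ℝ) * (1/2) ^ (N + k) := by
      refine Summable.congr (Summable.mul_left (2 * (1/2) ^ N) summable_geometric_two) ?_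
      intro k; rw [hsummand k]
    have hsum : (∑' k : ℕ, (2 : ℝ) * (1/2) ^ (N + k)) = 4 * (1/2) ^ N := by
      calc (∑' k : ℕ, (2 : ℝ) * (1/2) ^ (N + k))
          = ∑' k : ℕ, (2 * (1/2 : ℝ) ^ N) * (1/2) ^ k := tsum_congr hsummand
        _ = (2 * (1/2 : ℝ) ^ N) * ∑' k : ℕ, (1/2 : ℝ) ^ k := tsum_mul_left
        _ = 4 * (1/2) ^ N := by rw [tsum_geometric_two]; ring
    have hQle : Q {x | u N x ≠ hstar x} ≤ ENNReal.ofReal (4 * (1/2) ^ N) := by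
      calc Q {x | u N x ≠ hstar x}
          ≤ Q (⋃ k, {x | u (N + k) x ≠ u (N + k + 1) x}) := measure_mono (hBC N)
        _ ≤ ∑' k, Q {x | u (N + k) x ≠ u (N + k + 1) x} := measure_iUnion_le _
        _ ≤ ∑' k, ENNReal.ofReal (2 * (1/2) ^ (N + k)) := by
            refine ENNReal.tsum_le_tsum fun k => ?_
            exact (ENNReal.le_ofReal_iff_toReal_le (measure_ne_top Q _)
              (by positivity)).2 (hd (N + k))
        _ = ENNReal.ofReal (∑' k : ℕ, (2 : ℝ) * (1/2) ^ (N + k)) :=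
            (ENNReal.ofReal_tsum_of_nonneg (fun k => by positivity) hsummable).symm
        _ = ENNReal.ofReal (4 * (1/2) ^ N) := by rw [hsum]
    exact (ENNReal.le_ofReal_iff_toReal_le (measure_ne_top Q _) (by positivity)).1 hQle
  have hgeom : Tendsto (fun N : ℕ => (4 : ℝ) * (1/2) ^ N) atTop (nhds 0) := by
    have := (tendsto_pow_atTop_nhds_zero_of_lt_one
      (by norm_num : (0:ℝ) ≤ 1/2) (by norm_num : (1/2:ℝ) < 1)).const_mul (4 : ℝ)
    simpa using this
  refine ⟨hstar, hstar_meas, ?_, ?_⟩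
  · -- the infimum of distances is zero
    have hnn : ∀ a ∈ (fun h => (Q {x | h x ≠ hstar x}).toReal) '' H, 0 ≤ a := by
      rintro a ⟨h, -, rfl⟩; exact ENNReal.toReal_nonneg
    refine le_antisymm ?_ (Real.sInf_nonneg hnn)
    have hle : ∀ N : ℕ,
        sInf ((fun h => (Q {x | h x ≠ hstar x}).toReal) '' H) ≤ 4 * (1/2) ^ N := by
      intro N
      exact le_trans (csInf_le ⟨0, hnn⟩ ⟨u N, huH N, rfl⟩) (hD N)
    exact ge_of_tendsto' hgeom hle
  · -- the error of hstar equals the optimal error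
    have hPD : ∀ N : ℕ, (P {p : X × Bool | u N p.1 ≠ hstar p.1}).toReal ≤ 4 * (1/2) ^ N := by
      intro N
      rw [← agn_map P (hu N) hstar_meas]
      exact hD N
    have hopt_le : ∀ N : ℕ, optErr P H ≤ er P (u N) :=
      fun N => csInf_le hbdd ⟨u N, huH N, rfl⟩
    have herr_le : ∀ N : ℕ, er P (u N) ≤ optErr P H + 1 / ((N : ℝ) + 1) := by
      intro N
      refine le_trans (hgE (mι N)).le (add_le_add_right ?_ _)
      have hcast : (N : ℝ) ≤ (mι N : ℝ) := by exact_mod_cast (hmlt N).le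
      have h1 : (N : ℝ) + 1 ≤ (mι N : ℝ) + 1 := by linarith
      exact one_div_le_one_div_of_le (by positivity) h1
    have hflip : ∀ N : ℕ, {p : X × Bool | hstar p.1 ≠ u N p.1}
        = {p : X × Bool | u N p.1 ≠ hstar p.1} := fun N => Set.ext fun _ => ne_comm
    have h1 : er P hstar ≤ optErr P H := by
      have ht : Tendsto (fun N : ℕ => optErr P H + (1 / ((N : ℝ) + 1) + 4 * (1/2) ^ N))
          atTop (nhds (optErr P H)) := by
        have h2 : Tendsto (fun N : ℕ => 1 / ((N : ℝ) + 1) + 4 * (1/2) ^ N) atTop (nhds 0) := by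
          have := tendsto_one_div_add_atTop_nhds_zero_nat.add hgeom
          simpa using this
        have h3 : Tendsto (fun _ : ℕ => optErr P H) atTop (nhds (optErr P H)) :=
          tendsto_const_nhds
        simpa using h3.add h2
      refine ge_of_tendsto' ht ?_
      intro N
      have t1 : er P hstar ≤ er P (u N) + (P {p : X × Bool | hstar p.1 ≠ u N p.1}).toReal :=
        agn_er_tri P _ _
      rw [hflip N] at t1
      have t2 := herr_le N
      have t3 := hPD N
      linarith
    have h2 : optErr P H ≤ er P hstar := by
      have ht : Tendsto (fun N : ℕ => er P hstar + 4 * (1/2) ^ N) atTop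
          (nhds (er P hstar)) := by
        have h3 : Tendsto (fun _ : ℕ => er P hstar) atTop (nhds (er P hstar)) :=
          tendsto_const_nhds
        simpa using h3.add hgeom
      refine ge_of_tendsto' ht ?_
      intro N
      have t1 : er P (u N) ≤ er P hstar + (P {p : X × Bool | u N p.1 ≠ hstar p.1}).toReal :=
        agn_er_tri P (u N) hstar
      have t2 := hopt_le N
      have t3 := hPD N
      linarith
    linarith


end Agn
end
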